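/- arXiv:1802.02850 — 4 statements merged into one kernel-verified Lean document; each statement's English description precedes it below -/
import Mathlib

section
/- (Theorem 1, dominance of the uniform-on-conditional-type-classes attack.) Let A be a nonempty finite set, n ≥ 1, and let d_n : A^n × A^n → ℝ be nonnegative and permutation-invariant. Let P_0, P_1 be PMFs on A, let Δ_0, Δ_1 ≥ 0, let γ, β ≥ 0, and let Φ : A^n → [0,1] be permutation-invariant. Then for every channel A_0 ∈ C_{Δ_0} and every channel A_1 ∈ C_{Δ_1}, γ·P_FN(Φ,A_1) + β·P_FP(Φ,A_0) ≤ (n+1)^{|A|·(|A|−1)} · ( γ·P_FN(Φ,A*_{Δ_1}) + β·P_FP(Φ,A*_{Δ_0}) ), where A*_{Δ_0}, A*_{Δ_1} are the channels defined below. -/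
open scoped Classical
open Finset Filter

noncomputable section

/-- A probability mass function on a finite alphabet, as a real-valued function. -/
def IsPMF {A : Type} [Fintype A] (P : A → ℝ) : Prop :=
  (∀ a, 0 ≤ P a) ∧ ∑ a, P a = 1

/-- Kullback--Leibler divergence `D(Q‖P) = ∑_{a : Q a > 0} Q a · ln (Q a / P a)`. -/
def klDiv {A : Type} [Fintype A] (Q P : A → ℝ) : ℝ :=
  ∑ a, if 0 < Q a then Q a * Real.log (Q a / P a) else 0

/-- First marginal of a joint PMF on `A × A`. -/
def margX {A : Type} [Fintype A] (Q : A × A → ℝ) : A → ℝ := fun a => ∑ b, Q (a, b)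

/-- Second marginal of a joint PMF on `A × A`. -/
def margY {A : Type} [Fintype A] (Q : A × A → ℝ) : A → ℝ := fun b => ∑ a, Q (a, b)

/-- Expected distortion of a joint PMF. -/
def expDist {A : Type} [Fintype A] (d : A → A → ℝ) (Q : A × A → ℝ) : ℝ :=
  ∑ q : A × A, Q q * d q.1 q.2

/-- Generalized divergence `D̃_Δ(P_Y, P)`: minimum of `D(Q_X‖P)` over joint PMFs `Q`
with second marginal `P_Y` and expected distortion at most `Δ`. -/
def Dtilde {A : Type} [Fintype A] (d : A → A → ℝ) (Δ : ℝ) (PY P : A → ℝ) : ℝ :=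
  sInf {v | ∃ Q : A × A → ℝ,
    IsPMF Q ∧ margY Q = PY ∧ expDist d Q ≤ Δ ∧ v = klDiv (margX Q) P}

/-- Earth mover distance between two PMFs. -/
def EMD {A : Type} [Fintype A] (d : A → A → ℝ) (P P' : A → ℝ) : ℝ :=
  sInf {v | ∃ R : A × A → ℝ,
    IsPMF R ∧ margX R = P ∧ margY R = P' ∧ v = expDist d R}

/-- Memoryless (product) probability of a sequence. -/
def seqProb {A : Type} {n : ℕ} (P : A → ℝ) (x : Fin n → A) : ℝ := ∏ i, P (x i)

/-- Additive extension of a per-letter distortion to sequences. -/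
def dSeq {A : Type} {n : ℕ} (d : A → A → ℝ) (x y : Fin n → A) : ℝ := ∑ i, d (x i) (y i)

/-- Empirical PMF (type) of a sequence. -/
def empP {A : Type} [Fintype A] [DecidableEq A] {n : ℕ} (x : Fin n → A) : A → ℝ :=
  fun a => ((univ.filter fun i => x i = a).card : ℝ) / (n : ℝ)

/-- Empirical entropy of a sequence. -/
def empEnt {A : Type} [Fintype A] [DecidableEq A] {n : ℕ} (y : Fin n → A) : ℝ :=
  -∑ a, if 0 < empP y a then empP y a * Real.log (empP y a) else 0

/-- Conditional type class `T(y|x)`. -/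
def condTypeClass {A : Type} [Fintype A] [DecidableEq A] {n : ℕ} (x y : Fin n → A) :
    Finset (Fin n → A) :=
  univ.filter fun y' => ∀ a b : A,
    (univ.filter fun i => x i = a ∧ y' i = b).card
      = (univ.filter fun i => x i = a ∧ y i = b).card

/-- Number of distinct conditional type classes `T(y|x)` arising from `y` with
`dn x y ≤ n·Δ`. -/
def numCondTypes {A : Type} [Fintype A] [DecidableEq A] {n : ℕ}
    (dn : (Fin n → A) → (Fin n → A) → ℝ) (Δ : ℝ) (x : Fin n → A) : ℕ :=
  ((univ.filter fun y => dn x y ≤ (n : ℝ) * Δ).image fun y => condTypeClass x y).card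

/-- The optimal attack channel `A*_Δ(y|x) = c_n(x)/|T(y|x)|` on admissible `y`,
and `0` otherwise; here `c_n(x)` is the reciprocal of the number of admissible
conditional type classes. -/
def Astar {A : Type} [Fintype A] [DecidableEq A] {n : ℕ}
    (dn : (Fin n → A) → (Fin n → A) → ℝ) (Δ : ℝ) (x y : Fin n → A) : ℝ :=
  if dn x y ≤ (n : ℝ) * Δ then
    ((numCondTypes dn Δ x : ℝ))⁻¹ / ((condTypeClass x y).card : ℝ)
  else 0

/-- A channel on `A^n`: `W x y` is the conditional probability of output `y` given input `x`. -/
def IsChannel {A : Type} [Fintype A] {n : ℕ}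
    (W : (Fin n → A) → (Fin n → A) → ℝ) : Prop :=
  (∀ x y, 0 ≤ W x y) ∧ ∀ x, ∑ y, W x y = 1

/-- The class `C_Δ` of admissible channels: those assigning zero probability to any
`y` with `dn x y > n·Δ`. -/
def InC {A : Type} [Fintype A] {n : ℕ}
    (dn : (Fin n → A) → (Fin n → A) → ℝ) (Δ : ℝ)
    (W : (Fin n → A) → (Fin n → A) → ℝ) : Prop :=
  IsChannel W ∧ ∀ x y, (n : ℝ) * Δ < dn x y → W x y = 0

/-- False positive probability: `Φ y` is the probability of deciding `H₁` given `y`. -/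
def PFP {A : Type} [Fintype A] {n : ℕ} (P0 : A → ℝ) (Φ : (Fin n → A) → ℝ)
    (A0 : (Fin n → A) → (Fin n → A) → ℝ) : ℝ :=
  ∑ x, ∑ y, seqProb P0 x * A0 x y * Φ y

/-- False negative probability. -/
def PFN {A : Type} [Fintype A] {n : ℕ} (P1 : A → ℝ) (Φ : (Fin n → A) → ℝ)
    (A1 : (Fin n → A) → (Fin n → A) → ℝ) : ℝ :=
  ∑ x, ∑ y, seqProb P1 x * A1 x y * (1 - Φ y)

/-- Sequence-level generalized divergence
`D̃ⁿ_Δ(y,P) = min_{x : d(x,y) ≤ nΔ} D(P̂_x‖P)`. -/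
def DtildeN {A : Type} [Fintype A] [DecidableEq A] {n : ℕ} (d : A → A → ℝ) (Δ : ℝ)
    (y : Fin n → A) (P : A → ℝ) : ℝ :=
  sInf {v | ∃ x : Fin n → A, dSeq d x y ≤ (n : ℝ) * Δ ∧ v = klDiv (empP x) P}

section Aux

variable {A : Type} [Fintype A] [DecidableEq A] {n : ℕ}

lemma exists_perm_comp {n : ℕ} {C : Type*} [DecidableEq C] (f g : Fin n → C)
    (h : ∀ c, (univ.filter fun i => f i = c).card = (univ.filter fun i => g i = c).card) :
    ∃ π : Equiv.Perm (Fin n), ∀ i, f (π i) = g i := by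
  have hcard : ∀ c, Fintype.card {i // g i = c} = Fintype.card {i // f i = c} := by
    intro c
    rw [Fintype.card_subtype, Fintype.card_subtype]
    exact (h c).symm
  exact ⟨Equiv.ofFiberEquiv (fun c => Fintype.equivOfCardEq (hcard c)),
    fun i => Equiv.ofFiberEquiv_map _ i⟩

variable {A : Type} [Fintype A] [DecidableEq A] {n : ℕ}

/-- joint count function -/
def jc (x y : Fin n → A) : A × A → ℕ :=
  fun p => (univ.filter fun i => x i = p.1 ∧ y i = p.2).card

lemma mem_ctc_iff {x y y' : Fin n → A} :
    y' ∈ condTypeClass x y ↔ jc x y' = jc x y := by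
  simp only [condTypeClass, mem_filter, mem_univ, true_and, jc, funext_iff, Prod.forall]

lemma self_mem_ctc (x y : Fin n → A) : y ∈ condTypeClass x y := mem_ctc_iff.2 rfl

lemma ctc_eq_of_mem {x y y' : Fin n → A} (h : y' ∈ condTypeClass x y) :
    condTypeClass x y' = condTypeClass x y := by
  have hj := mem_ctc_iff.1 h
  ext z
  rw [mem_ctc_iff, mem_ctc_iff, hj]

lemma exists_perm_of_mem {x y y' : Fin n → A} (h : y' ∈ condTypeClass x y) :
    ∃ π : Equiv.Perm (Fin n), x ∘ π = x ∧ y ∘ π = y' := by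
  have hj := mem_ctc_iff.1 h
  have hcnt : ∀ c, (univ.filter fun i => (x i, y i) = c).card
      = (univ.filter fun i => (x i, y' i) = c).card := by
    rintro ⟨a, b⟩
    have h1 : (fun i => (x i, y i) = (a, b)) = fun i => x i = a ∧ y i = b := by
      funext i; simp [Prod.ext_iff]
    have h2 : (fun i => (x i, y' i) = (a, b)) = fun i => x i = a ∧ y' i = b := by
      funext i; simp [Prod.ext_iff]
    simp only [h1, h2]
    exact (congrFun hj (a, b)).symm
  obtain ⟨π, hπ⟩ := exists_perm_comp (fun i => (x i, y i)) (fun i => (x i, y' i)) hcnt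
  exact ⟨π, funext fun i => congrArg Prod.fst (hπ i), funext fun i => congrArg Prod.snd (hπ i)⟩

lemma row_sum (x y : Fin n → A) (a : A) :
    ∑ b, jc x y (a, b) = (univ.filter fun i => x i = a).card := by
  have h := Finset.card_eq_sum_card_fiberwise
    (s := univ.filter fun i => x i = a) (t := (univ : Finset A)) (f := y)
    (fun i _ => mem_univ _)
  rw [h]
  refine Finset.sum_congr rfl fun b _ => ?_
  rw [Finset.filter_filter]
  rfl

lemma jc_le (x y : Fin n → A) (p : A × A) : jc x y p ≤ n := by
  exact le_trans (Finset.card_filter_le _ _) (by simp)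

lemma numCondTypes_le [Nonempty A]
    (dn : (Fin n → A) → (Fin n → A) → ℝ) (Δ : ℝ) (x : Fin n → A) :
    numCondTypes dn Δ x ≤ (n + 1) ^ (Fintype.card A * (Fintype.card A - 1)) := by
  classical
  set S := univ.filter fun y => dn x y ≤ (n : ℝ) * Δ with hS
  set J := S.image (jc x) with hJ
  have h1 : numCondTypes dn Δ x ≤ J.card := by
    apply Finset.card_le_card_of_surjOn
      (fun c => univ.filter fun y' => jc x y' = c)
    intro T hT
    simp only [numCondTypes, coe_image, Set.mem_image, mem_coe] at hT
    obtain ⟨y, hy, rfl⟩ := hT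
    refine ⟨jc x y, ?_, ?_⟩
    · exact Finset.mem_coe.2 (Finset.mem_image_of_mem _ hy)
    · ext y'
      simp only [mem_filter, mem_univ, true_and, mem_ctc_iff]
  refine h1.trans ?_
  -- bound J.card by injecting into functions to Fin (n+1)
  obtain ⟨b₀⟩ := ‹Nonempty A›
  have h2 : J.card ≤ Fintype.card (A × {b : A // b ≠ b₀} → Fin (n + 1)) := by
    apply Finset.card_le_card_of_injOn
      (fun c q => (⟨min (c (q.1, q.2.1)) n, by omega⟩ : Fin (n + 1)))
      (fun _ _ => mem_univ _)
    intro c hc c' hc' hcc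
    simp only [hJ, coe_image, Set.mem_image, mem_coe] at hc hc'
    obtain ⟨y, -, rfl⟩ := hc
    obtain ⟨y', -, rfl⟩ := hc'
    have hne : ∀ a : A, ∀ b : A, b ≠ b₀ → jc x y (a, b) = jc x y' (a, b) := by
      intro a b hb
      have := congrFun hcc (a, ⟨b, hb⟩)
      simp only [Fin.mk.injEq] at this
      have h1' := jc_le x y (a, b)
      have h2' := jc_le x y' (a, b)
      omega
    funext p
    obtain ⟨a, b⟩ := p
    by_cases hb : b = b₀
    · rw [hb]
      have hrow := row_sum x y a
      have hrow' := row_sum x y' a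
      have hsplit : ∀ z : Fin n → A, ∑ b, jc x z (a, b)
          = jc x z (a, b₀) + ∑ b ∈ univ.erase b₀, jc x z (a, b) := by
        intro z
        rw [← Finset.add_sum_erase _ _ (mem_univ b₀)]
      have hse : ∑ b ∈ univ.erase b₀, jc x y (a, b)
          = ∑ b ∈ univ.erase b₀, jc x y' (a, b) :=
        Finset.sum_congr rfl fun b hb => hne a b (Finset.ne_of_mem_erase hb)
      have e1 := hsplit y
      have e2 := hsplit y'
      rw [hrow] at e1
      rw [hrow'] at e2
      omega
    · exact hne a b hb
  refine h2.trans_eq ?_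
  rw [Fintype.card_fun, Fintype.card_fin, Fintype.card_prod]
  congr 1
  congr 1
  have : Fintype.card {b : A // b ≠ b₀} = Fintype.card A - 1 := by
    rw [Fintype.card_subtype]
    rw [Finset.filter_ne' univ b₀]
    rw [Finset.card_erase_of_mem (mem_univ b₀)]
    simp
  rw [this]

lemma key_ineq [Nonempty A]
    (dn : (Fin n → A) → (Fin n → A) → ℝ)
    (hdperm : ∀ (π : Equiv.Perm (Fin n)) (x y : Fin n → A), dn (x ∘ π) (y ∘ π) = dn x y)
    (Δ : ℝ) (W : (Fin n → A) → (Fin n → A) → ℝ) (hW : InC dn Δ W)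
    (g : (Fin n → A) → ℝ) (hg0 : ∀ y, 0 ≤ g y) (hg1 : ∀ y, g y ≤ 1)
    (hginv : ∀ (π : Equiv.Perm (Fin n)) (y : Fin n → A), g (y ∘ π) = g y)
    (x : Fin n → A) :
    ∑ y, W x y * g y ≤ ((n : ℝ) + 1) ^ (Fintype.card A * (Fintype.card A - 1))
      * ∑ y, Astar dn Δ x y * g y := by
  classical
  set S := univ.filter fun y => dn x y ≤ (n : ℝ) * Δ with hS
  set I := S.image (condTypeClass x) with hI
  set m := I.card with hm'
  have hm : numCondTypes dn Δ x = m := rfl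
  have hAnn : ∀ y, 0 ≤ Astar dn Δ x y := by
    intro y
    unfold Astar
    split
    · positivity
    · exact le_refl 0
  have hRHSnn : 0 ≤ ∑ y, Astar dn Δ x y * g y :=
    Finset.sum_nonneg fun y _ => mul_nonneg (hAnn y) (hg0 y)
  -- restrict sums to S
  have hWres : ∑ y, W x y * g y = ∑ y ∈ S, W x y * g y := by
    refine (Finset.sum_subset (Finset.subset_univ S) ?_).symm
    intro y _ hy
    have : (n : ℝ) * Δ < dn x y := by
      by_contra hle
      exact hy (Finset.mem_filter.2 ⟨mem_univ y, not_lt.1 hle⟩)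
    rw [hW.2 x y this, zero_mul]
  have hAres : ∑ y, Astar dn Δ x y * g y = ∑ y ∈ S, Astar dn Δ x y * g y := by
    refine (Finset.sum_subset (Finset.subset_univ S) ?_).symm
    intro y _ hy
    have : ¬ dn x y ≤ (n : ℝ) * Δ := fun hle => hy (Finset.mem_filter.2 ⟨mem_univ y, hle⟩)
    rw [Astar, if_neg this, zero_mul]
  -- fiberwise decomposition
  have hWfib : ∑ y ∈ S, W x y * g y
      = ∑ T ∈ I, ∑ y ∈ S.filter (fun y => condTypeClass x y = T), W x y * g y :=
    (Finset.sum_fiberwise_of_maps_to (fun y hy => Finset.mem_image_of_mem _ hy) _).symm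
  have hAfib : ∑ y ∈ S, Astar dn Δ x y * g y
      = ∑ T ∈ I, ∑ y ∈ S.filter (fun y => condTypeClass x y = T), Astar dn Δ x y * g y :=
    (Finset.sum_fiberwise_of_maps_to (fun y hy => Finset.mem_image_of_mem _ hy) _).symm
  -- per-fiber inequality
  have hmpos : ∀ T ∈ I, 0 < m := fun T hT => Finset.card_pos.2 ⟨T, hT⟩
  have hperT : ∀ T ∈ I,
      ∑ y ∈ S.filter (fun y => condTypeClass x y = T), W x y * g y
        ≤ (m : ℝ) * ∑ y ∈ S.filter (fun y => condTypeClass x y = T), Astar dn Δ x y * g y := by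
    intro T hT
    obtain ⟨y₀, hy₀S, hy₀T⟩ := Finset.mem_image.1 hT
    have hfib : S.filter (fun y => condTypeClass x y = T) = T := by
      ext y
      simp only [Finset.mem_filter]
      constructor
      · rintro ⟨-, hcy⟩
        rw [← hcy]
        exact self_mem_ctc x y
      · intro hyT
        have hyT' : y ∈ condTypeClass x y₀ := hy₀T ▸ hyT
        obtain ⟨π, hxπ, hyπ⟩ := exists_perm_of_mem hyT'
        have hd : dn x y = dn x y₀ := by
          conv_lhs => rw [← hxπ, ← hyπ]
          exact hdperm π x y₀
        refine ⟨Finset.mem_filter.2 ⟨mem_univ y, ?_⟩, ?_⟩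
        · rw [hd]
          exact (Finset.mem_filter.1 hy₀S).2
        · rw [ctc_eq_of_mem hyT', hy₀T]
    have hconstg : ∀ y ∈ T, g y = g y₀ := by
      intro y hyT
      have hyT' : y ∈ condTypeClass x y₀ := hy₀T ▸ hyT
      obtain ⟨π, hxπ, hyπ⟩ := exists_perm_of_mem hyT'
      rw [← hyπ, hginv]
    have hTS : T ⊆ S := by
      rw [← hfib]
      exact Finset.filter_subset _ _
    have hy₀mem : y₀ ∈ T := hy₀T ▸ self_mem_ctc x y₀
    have hTcard : 0 < T.card := Finset.card_pos.2 ⟨y₀, hy₀mem⟩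
    have hmne : ((m : ℝ)) ≠ 0 := Nat.cast_ne_zero.2 (hmpos T hT).ne'
    have hTne : ((T.card : ℝ)) ≠ 0 := Nat.cast_ne_zero.2 hTcard.ne'
    rw [hfib]
    -- compute the A* fiber sum
    have hAval : ∀ y ∈ T, Astar dn Δ x y * g y = (m : ℝ)⁻¹ / (T.card : ℝ) * g y₀ := by
      intro y hyT
      have hyS := hTS hyT
      have hdy : dn x y ≤ (n : ℝ) * Δ := (Finset.mem_filter.1 hyS).2
      have hct : condTypeClass x y = T := by
        have hyT' : y ∈ condTypeClass x y₀ := hy₀T ▸ hyT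
        rw [ctc_eq_of_mem hyT', hy₀T]
      rw [Astar, if_pos hdy, hm, hct, hconstg y hyT]
    rw [Finset.sum_congr rfl hAval, Finset.sum_const, nsmul_eq_mul]
    have hA : (m : ℝ) * ((T.card : ℝ) * ((m : ℝ)⁻¹ / (T.card : ℝ) * g y₀)) = g y₀ := by
      field_simp
    rw [hA]
    -- bound the W fiber sum
    have hWle : ∑ y ∈ T, W x y * g y ≤ g y₀ := by
      calc ∑ y ∈ T, W x y * g y = ∑ y ∈ T, W x y * g y₀ :=
            Finset.sum_congr rfl fun y hy => by rw [hconstg y hy]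
        _ = (∑ y ∈ T, W x y) * g y₀ := by rw [Finset.sum_mul]
        _ ≤ 1 * g y₀ := by
            apply mul_le_mul_of_nonneg_right _ (hg0 y₀)
            rw [← hW.1.2 x]
            exact Finset.sum_le_sum_of_subset_of_nonneg (Finset.subset_univ T)
              (fun y _ _ => hW.1.1 x y)
        _ = g y₀ := one_mul _
    exact hWle
  -- combine
  calc ∑ y, W x y * g y = ∑ T ∈ I, ∑ y ∈ S.filter (fun y => condTypeClass x y = T), W x y * g y := by
        rw [hWres, hWfib]
    _ ≤ ∑ T ∈ I, (m : ℝ) * ∑ y ∈ S.filter (fun y => condTypeClass x y = T), Astar dn Δ x y * g y :=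
        Finset.sum_le_sum hperT
    _ = (m : ℝ) * ∑ y, Astar dn Δ x y * g y := by
        rw [← Finset.mul_sum, ← hAfib, ← hAres]
    _ ≤ ((n : ℝ) + 1) ^ (Fintype.card A * (Fintype.card A - 1)) * ∑ y, Astar dn Δ x y * g y := by
        apply mul_le_mul_of_nonneg_right _ hRHSnn
        have := numCondTypes_le dn Δ x
        rw [hm] at this
        calc (m : ℝ) ≤ (((n + 1) ^ (Fintype.card A * (Fintype.card A - 1)) : ℕ) : ℝ) := by
              exact_mod_cast this
          _ = ((n : ℝ) + 1) ^ (Fintype.card A * (Fintype.card A - 1)) := by push_cast; ring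

end Aux

/-- Theorem 1: dominance of the uniform-on-conditional-type-classes
attack channels `A*_{Δ₀}, A*_{Δ₁}`. -/
theorem dominant_attack
    {A : Type} [Fintype A] [DecidableEq A] [Nonempty A] {n : ℕ} (hn : 1 ≤ n)
    (dn : (Fin n → A) → (Fin n → A) → ℝ)
    (hdnn : ∀ x y, 0 ≤ dn x y)
    (hdperm : ∀ (π : Equiv.Perm (Fin n)) (x y : Fin n → A), dn (x ∘ π) (y ∘ π) = dn x y)
    (P0 P1 : A → ℝ) (hP0 : IsPMF P0) (hP1 : IsPMF P1)
    (Δ0 Δ1 : ℝ) (hΔ0 : 0 ≤ Δ0) (hΔ1 : 0 ≤ Δ1)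
    (γ β : ℝ) (hγ : 0 ≤ γ) (hβ : 0 ≤ β)
    (Φ : (Fin n → A) → ℝ) (hΦrange : ∀ y, Φ y ∈ Set.Icc (0 : ℝ) 1)
    (hΦinv : ∀ (π : Equiv.Perm (Fin n)) (y : Fin n → A), Φ (y ∘ π) = Φ y)
    (A0 A1 : (Fin n → A) → (Fin n → A) → ℝ)
    (hA0 : InC dn Δ0 A0) (hA1 : InC dn Δ1 A1) :
    γ * PFN P1 Φ A1 + β * PFP P0 Φ A0
      ≤ ((n : ℝ) + 1) ^ (Fintype.card A * (Fintype.card A - 1)) *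
          (γ * PFN P1 Φ (Astar dn Δ1) + β * PFP P0 Φ (Astar dn Δ0)) := by
  classical
  set K : ℝ := ((n : ℝ) + 1) ^ (Fintype.card A * (Fintype.card A - 1)) with hK
  have hsp0 : ∀ x : Fin n → A, 0 ≤ seqProb P0 x :=
    fun x => Finset.prod_nonneg fun i _ => hP0.1 (x i)
  have hsp1 : ∀ x : Fin n → A, 0 ≤ seqProb P1 x :=
    fun x => Finset.prod_nonneg fun i _ => hP1.1 (x i)
  have hg0 : ∀ y, (0:ℝ) ≤ 1 - Φ y := fun y => by
    have := (hΦrange y).2; linarith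
  have hg1 : ∀ y, (1:ℝ) - Φ y ≤ 1 := fun y => by
    have := (hΦrange y).1; linarith
  have hginv : ∀ (π : Equiv.Perm (Fin n)) (y : Fin n → A), (1:ℝ) - Φ (y ∘ π) = 1 - Φ y :=
    fun π y => by rw [hΦinv]
  have hFN : PFN P1 Φ A1 ≤ K * PFN P1 Φ (Astar dn Δ1) := by
    unfold PFN
    rw [Finset.mul_sum]
    apply Finset.sum_le_sum
    intro x _
    have h := key_ineq dn hdperm Δ1 A1 hA1 (fun y => 1 - Φ y) hg0 hg1 hginv x
    calc ∑ y, seqProb P1 x * A1 x y * (1 - Φ y)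
        = seqProb P1 x * ∑ y, A1 x y * (1 - Φ y) := by
          rw [Finset.mul_sum]; exact Finset.sum_congr rfl fun y _ => by ring
      _ ≤ seqProb P1 x * (K * ∑ y, Astar dn Δ1 x y * (1 - Φ y)) :=
          mul_le_mul_of_nonneg_left h (hsp1 x)
      _ = K * ∑ y, seqProb P1 x * Astar dn Δ1 x y * (1 - Φ y) := by
          simp only [Finset.mul_sum]
          apply Finset.sum_congr rfl
          intros; ring
  have hFP : PFP P0 Φ A0 ≤ K * PFP P0 Φ (Astar dn Δ0) := by
    unfold PFP
    rw [Finset.mul_sum]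
    apply Finset.sum_le_sum
    intro x _
    have h := key_ineq dn hdperm Δ0 A0 hA0 Φ (fun y => (hΦrange y).1)
      (fun y => (hΦrange y).2) hΦinv x
    calc ∑ y, seqProb P0 x * A0 x y * Φ y
        = seqProb P0 x * ∑ y, A0 x y * Φ y := by
          rw [Finset.mul_sum]; exact Finset.sum_congr rfl fun y _ => by ring
      _ ≤ seqProb P0 x * (K * ∑ y, Astar dn Δ0 x y * Φ y) :=
          mul_le_mul_of_nonneg_left h (hsp0 x)
      _ = K * ∑ y, seqProb P0 x * Astar dn Δ0 x y * Φ y := by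
          simp only [Finset.mul_sum]
          apply Finset.sum_congr rfl
          intros; ring
  calc γ * PFN P1 Φ A1 + β * PFP P0 Φ A0
      ≤ γ * (K * PFN P1 Φ (Astar dn Δ1)) + β * (K * PFP P0 Φ (Astar dn Δ0)) :=
        add_le_add (mul_le_mul_of_nonneg_left hFN hγ) (mul_le_mul_of_nonneg_left hFP hβ)
    _ = K * (γ * PFN P1 Φ (Astar dn Δ1) + β * PFP P0 Φ (Astar dn Δ0)) := by ring
end
end

section
/- (Lemma 1, part (a): pointwise bound on admissible Neyman–Pearson defence rules.) Let A be a nonempty finite set, n ≥ 1, d_n : A^n × A^n → ℝ nonnegative and permutation-invariant with d_n(y,y) = 0 for all y, P_0 a strictly positive PMF on A, Δ_0 ≥ 0 and λ > 0. Suppose Φ : A^n → [0,1] is permutation-invariant and satisfies P_FP(Φ,A) ≤ e^{−nλ} for every channel A ∈ C_{Δ_0}. Then for every y ∈ A^n, Φ(y) ≤ (n+1)^{|A|²·(|A|−1)} · exp( −n·( λ − min_{x ∈ A^n : d_n(x,y) ≤ nΔ_0} D(P̂_x ‖ P_0) ) ). -/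
open scoped Classical
open Finset Filter

noncomputable section

section AuxNP
set_option linter.unusedSectionVars false
variable {A : Type} [Fintype A] [DecidableEq A] {n : ℕ}

def cntF (f : Fin n → A) : A → ℕ := fun a => (univ.filter fun i => f i = a).card

lemma cnt_card (f : Fin n → A) (a : A) : Fintype.card {i // f i = a} = cntF f a :=
  Fintype.card_subtype _

lemma sum_cnt (f : Fin n → A) : ∑ a, cntF f a = n := by
  simp only [cntF]
  rw [← Finset.card_eq_sum_card_fiberwise (fun i (_ : i ∈ univ) => Finset.mem_univ (f i))]
  simp
set_option linter.unusedSectionVars false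

lemma cnt_le (f : Fin n → A) (a : A) : cntF f a ≤ n := by
  simpa [cntF] using Finset.card_filter_le univ (fun i => f i = a)

lemma cnt_comp (f : Fin n → A) (π : Equiv.Perm (Fin n)) : cntF (f ∘ π) = cntF f := by
  funext a
  rw [← cnt_card, ← cnt_card]
  exact Fintype.card_congr (π.subtypeEquiv (fun i => Iff.rfl))

lemma cnt_eq_iff (f g : Fin n → A) : cntF f = cntF g ↔ ∃ π : Equiv.Perm (Fin n), f = g ∘ π := by
  constructor
  · intro h
    have e : ∀ a, {i // f i = a} ≃ {i // g i = a} := fun a =>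
      Fintype.equivOfCardEq (by rw [cnt_card, cnt_card, h])
    refine ⟨Equiv.ofFiberEquiv e, funext fun i => ?_⟩
    exact (Equiv.ofFiberEquiv_map e i).symm
  · rintro ⟨π, rfl⟩
    exact cnt_comp g π

lemma prod_cnt_pow {M : Type*} [CommMonoid M] (f : Fin n → A) (h : A → M) :
    ∏ i, h (f i) = ∏ a, h a ^ cntF f a := by
  rw [← Finset.prod_fiberwise' univ f h]
  exact Finset.prod_congr rfl fun a _ => by rw [Finset.prod_const]; rfl

lemma stab_card (f : Fin n → A) :
    (univ.filter fun π : Equiv.Perm (Fin n) => f ∘ π = f).card = ∏ a, (cntF f a).factorial := by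
  rw [← Fintype.card_subtype, DomMulAct.stabilizer_card f]
  exact Finset.prod_congr rfl fun a _ => by rw [cnt_card]

lemma orbit_stab (f : Fin n → A) :
    (univ.filter fun g : Fin n → A => cntF g = cntF f).card * ∏ a, (cntF f a).factorial
      = n.factorial := by
  have himg : (univ.filter fun g : Fin n → A => cntF g = cntF f)
      = Finset.image (fun π : Equiv.Perm (Fin n) => f ∘ π) univ := by
    ext g
    simp only [Finset.mem_filter, Finset.mem_univ, true_and, Finset.mem_image]
    rw [cnt_eq_iff]
    constructor
    · rintro ⟨π, rfl⟩; exact ⟨π, rfl⟩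
    · rintro ⟨π, rfl⟩; exact ⟨π, rfl⟩
  have hfiber : ∀ g ∈ Finset.image (fun π : Equiv.Perm (Fin n) => f ∘ π) univ,
      (univ.filter fun π : Equiv.Perm (Fin n) => f ∘ π = g).card
        = ∏ a, (cntF f a).factorial := by
    intro g hg
    obtain ⟨σ, -, hσ⟩ := Finset.mem_image.1 hg
    rw [← stab_card f]
    apply Finset.card_bij' (fun π _ => σ.symm.trans π) (fun τ _ => σ.trans τ)
    · intro π hπ
      simp only [Finset.mem_filter, Finset.mem_univ, true_and] at *
      funext j
      have := congrFun hπ (σ.symm j)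
      simp only [Function.comp_apply] at this ⊢
      rw [Equiv.trans_apply, this, ← hσ]
      simp [Function.comp_apply, Equiv.apply_symm_apply]
    · intro τ hτ
      simp only [Finset.mem_filter, Finset.mem_univ, true_and] at *
      funext j
      have := congrFun hτ (σ j)
      simp only [Function.comp_apply, Equiv.trans_apply] at this ⊢
      rw [this]
      exact congrFun hσ j
    · intro π _; ext j; simp
    · intro τ _; ext j; simp
  have hcard : (univ : Finset (Equiv.Perm (Fin n))).card = n.factorial := by
    rw [Finset.card_univ, Fintype.card_perm, Fintype.card_fin]
  have := Finset.card_eq_sum_card_fiberwise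
    (f := fun π : Equiv.Perm (Fin n) => f ∘ π)
    (t := Finset.image (fun π : Equiv.Perm (Fin n) => f ∘ π) univ)
    (s := univ) (fun π _ => Finset.mem_image_of_mem _ (Finset.mem_univ π))
  rw [hcard, Finset.sum_congr rfl hfiber, Finset.sum_const, smul_eq_mul] at this
  rw [himg, this]

lemma fac_le_aux₁ {k c : ℕ} (h : k ≤ c) : c.factorial ≤ k.factorial * c ^ (c - k) := by
  induction c, h using Nat.le_induction with
  | base => simp
  | succ c hkc ih =>
    have h1 : c + 1 - k = (c - k) + 1 := by omega
    rw [Nat.factorial_succ, h1, pow_succ]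
    calc (c + 1) * c.factorial ≤ (c + 1) * (k.factorial * c ^ (c - k)) := by
          exact Nat.mul_le_mul_left _ ih
      _ ≤ (c + 1) * (k.factorial * (c + 1) ^ (c - k)) := by
          exact Nat.mul_le_mul_left _ (Nat.mul_le_mul_left _ (Nat.pow_le_pow_left (by omega) _))
      _ = k.factorial * ((c + 1) ^ (c - k) * (c + 1)) := by ring
  
lemma fac_le_aux₂ {c k : ℕ} (h : c ≤ k) : c.factorial * c ^ (k - c) ≤ k.factorial := by
  induction k, h using Nat.le_induction with
  | base => simp
  | succ k hck ih =>
    have h1 : k + 1 - c = (k - c) + 1 := by omega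
    rw [h1, pow_succ, Nat.factorial_succ, ← mul_assoc]
    calc c.factorial * c ^ (k - c) * c ≤ k.factorial * c := Nat.mul_le_mul_right _ ih
      _ ≤ k.factorial * (k + 1) := Nat.mul_le_mul_left _ (by omega)
      _ = (k + 1) * k.factorial := mul_comm _ _

lemma l2 (c k : ℕ) : c.factorial * c ^ k ≤ k.factorial * c ^ c := by
  rcases le_or_gt k c with h | h
  · have h2 : c ^ k * c ^ (c - k) = c ^ c := by rw [← pow_add]; congr 1; omega
    calc c.factorial * c ^ k ≤ (k.factorial * c ^ (c - k)) * c ^ k :=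
          Nat.mul_le_mul_right _ (fac_le_aux₁ h)
      _ = k.factorial * (c ^ k * c ^ (c - k)) := by ring
      _ = k.factorial * c ^ c := by rw [h2]
  · have h2 : c ^ k = c ^ (k - c) * c ^ c := by rw [← pow_add]; congr 1; omega
    have h3 : c.factorial * c ^ k = (c.factorial * c ^ (k - c)) * c ^ c := by rw [h2]; ring
    rw [h3]
    exact Nat.mul_le_mul_right _ (fac_le_aux₂ h.le)

lemma sum_cnt_of_mem {t : A → ℕ} (ht : t ∈ (univ : Finset (Fin n → A)).image cntF) :
    ∑ a, t a = n := by
  obtain ⟨p, -, rfl⟩ := Finset.mem_image.1 ht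
  exact sum_cnt p

lemma image_cnt_card [Nonempty A] :
    ((univ : Finset (Fin n → A)).image cntF).card ≤ (n + 1) ^ (Fintype.card A - 1) := by
  obtain ⟨a₀⟩ := ‹Nonempty A›
  have hmaps : ∀ t ∈ (univ : Finset (Fin n → A)).image cntF,
      (fun b : {a : A // a ≠ a₀} => t b.1) ∈
        Fintype.piFinset fun _ : {a : A // a ≠ a₀} => Finset.range (n + 1) := by
    intro t ht
    obtain ⟨p, -, rfl⟩ := Finset.mem_image.1 ht
    exact Fintype.mem_piFinset.2 fun b => Finset.mem_range.2 (Nat.lt_succ_of_le (cnt_le p b.1))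
  have hinj : Set.InjOn (fun (t : A → ℕ) (b : {a : A // a ≠ a₀}) => t b.1)
      ((univ : Finset (Fin n → A)).image cntF) := by
    intro t ht t' ht' h
    have ht2 : ∑ a, t a = n := sum_cnt_of_mem (Finset.mem_coe.1 ht)
    have ht2' : ∑ a, t' a = n := sum_cnt_of_mem (Finset.mem_coe.1 ht')
    funext a
    by_cases ha : a = a₀
    · subst ha
      rw [← Finset.add_sum_erase _ t (Finset.mem_univ a)] at ht2
      rw [← Finset.add_sum_erase _ t' (Finset.mem_univ a)] at ht2'
      have he : ∑ b ∈ univ.erase a, t b = ∑ b ∈ univ.erase a, t' b :=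
        Finset.sum_congr rfl fun b hb =>
          congrFun h ⟨b, Finset.ne_of_mem_erase hb⟩
      omega
    · exact congrFun h ⟨a, ha⟩
  have := Finset.card_le_card_of_injOn _ hmaps hinj
  refine this.trans (le_of_eq ?_)
  rw [Fintype.card_piFinset]
  simp only [Finset.card_range, Finset.prod_const, Finset.card_univ]
  congr 1
  rw [Fintype.card_subtype_compl, Fintype.card_subtype_eq]

lemma count_bound [Nonempty A] (f : Fin n → A) :
    n ^ n ≤ (n + 1) ^ (Fintype.card A - 1) *
      ((univ.filter fun g : Fin n → A => cntF g = cntF f).card *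
        ∏ a, (cntF f a) ^ (cntF f a)) := by
  set c := cntF f with hc
  set N := fun t : A → ℕ => (univ.filter fun g : Fin n → A => cntF g = t).card with hN
  have expand : (n : ℕ) ^ n = ∑ t ∈ (univ : Finset (Fin n → A)).image cntF,
      N t * ∏ a, c a ^ t a := by
    calc n ^ n = (∑ a, c a) ^ n := by rw [sum_cnt]
      _ = ∑ p : Fin n → A, ∏ i, c (p i) := Fintype.sum_pow c n
      _ = ∑ p : Fin n → A, ∏ a, c a ^ cntF p a :=
          Finset.sum_congr rfl fun p _ => prod_cnt_pow p c
      _ = _ := by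
          rw [Finset.sum_comp (fun t : A → ℕ => ∏ a, c a ^ t a) cntF]
          exact Finset.sum_congr rfl fun t _ => by rw [smul_eq_mul]
  have term_bound : ∀ t ∈ (univ : Finset (Fin n → A)).image cntF,
      N t * ∏ a, c a ^ t a ≤ N c * ∏ a, c a ^ c a := by
    intro t ht
    obtain ⟨p, -, rfl⟩ := Finset.mem_image.1 ht
    have key : (∏ a, c a ^ cntF p a) * ∏ a, (c a).factorial
        ≤ (∏ a, c a ^ c a) * ∏ a, (cntF p a).factorial := by
      rw [← Finset.prod_mul_distrib, ← Finset.prod_mul_distrib]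
      exact Finset.prod_le_prod' fun a _ => by
        have := l2 (c a) (cntF p a)
        calc c a ^ cntF p a * (c a).factorial = (c a).factorial * c a ^ cntF p a :=
              mul_comm _ _
          _ ≤ (cntF p a).factorial * c a ^ c a := this
          _ = c a ^ c a * (cntF p a).factorial := mul_comm _ _
    have h1 : N (cntF p) * ∏ a, (cntF p a).factorial = n.factorial := orbit_stab p
    have h2 : N c * ∏ a, (c a).factorial = n.factorial := orbit_stab f
    have hpos : 0 < (∏ a, (cntF p a).factorial) * ∏ a, (c a).factorial :=
      Nat.mul_pos (Finset.prod_pos fun a _ => Nat.factorial_pos _)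
        (Finset.prod_pos fun a _ => Nat.factorial_pos _)
    apply Nat.le_of_mul_le_mul_right _ hpos
    calc (N (cntF p) * ∏ a, c a ^ cntF p a) * ((∏ a, (cntF p a).factorial) * ∏ a, (c a).factorial)
        = (N (cntF p) * ∏ a, (cntF p a).factorial) * ((∏ a, c a ^ cntF p a) * ∏ a, (c a).factorial) := by ring
      _ = n.factorial * ((∏ a, c a ^ cntF p a) * ∏ a, (c a).factorial) := by rw [h1]
      _ ≤ n.factorial * ((∏ a, c a ^ c a) * ∏ a, (cntF p a).factorial) :=
          Nat.mul_le_mul_left _ key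
      _ = (N c * ∏ a, (c a).factorial) * ((∏ a, c a ^ c a) * ∏ a, (cntF p a).factorial) := by rw [h2]
      _ = (N c * ∏ a, c a ^ c a) * ((∏ a, (cntF p a).factorial) * ∏ a, (c a).factorial) := by ring
  calc (n : ℕ) ^ n = _ := expand
    _ ≤ ((univ : Finset (Fin n → A)).image cntF).card • (N c * ∏ a, c a ^ c a) :=
        Finset.sum_le_card_nsmul _ _ _ term_bound
    _ = ((univ : Finset (Fin n → A)).image cntF).card * (N c * ∏ a, c a ^ c a) := smul_eq_mul _ _
    _ ≤ (n + 1) ^ (Fintype.card A - 1) * (N c * ∏ a, c a ^ c a) :=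
        Nat.mul_le_mul_right _ image_cnt_card

lemma exp_klDiv_eq (hn : 0 < n) (P0 : A → ℝ) (hP0pos : ∀ a, 0 < P0 a) (x : Fin n → A) :
    Real.exp (-(n : ℝ) *
        (∑ a, if 0 < empP x a then empP x a * Real.log (empP x a / P0 a) else 0))
      = ∏ a, ((n : ℝ) * P0 a / (cntF x a : ℝ)) ^ (cntF x a) := by
  rw [Finset.mul_sum, Real.exp_sum]
  refine Finset.prod_congr rfl fun a _ => ?_
  have hemp : empP x a = (cntF x a : ℝ) / (n : ℝ) := rfl
  have hnne : (n : ℝ) ≠ 0 := Nat.cast_ne_zero.2 hn.ne'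
  by_cases hca : 0 < cntF x a
  · have hkpos : (0 : ℝ) < (cntF x a : ℝ) := Nat.cast_pos.2 hca
    have hpos : 0 < empP x a := by rw [hemp]; positivity
    rw [if_pos hpos, hemp]
    have harg : -(n : ℝ) * ((cntF x a : ℝ) / n * Real.log ((cntF x a : ℝ) / n / P0 a))
        = (cntF x a : ℝ) * Real.log ((cntF x a : ℝ) / n / P0 a)⁻¹ := by
      rw [Real.log_inv]; field_simp
    rw [harg]
    have hv : ((cntF x a : ℝ) / n / P0 a)⁻¹ = (n : ℝ) * P0 a / (cntF x a : ℝ) := by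
      field_simp
    rw [hv, Real.exp_nat_mul, Real.exp_log (div_pos (mul_pos (by positivity) (hP0pos a)) hkpos)]
  · have hca0 : cntF x a = 0 := Nat.eq_zero_of_not_pos hca
    have : ¬ 0 < empP x a := by rw [hemp, hca0]; norm_num
    rw [if_neg this, hca0, mul_zero, pow_zero, Real.exp_zero]

lemma key_bound [Nonempty A] (hn : 0 < n) (P0 : A → ℝ) (hP0pos : ∀ a, 0 < P0 a) (x : Fin n → A) :
    (((n : ℝ) + 1) ^ (Fintype.card A - 1))⁻¹ *
        Real.exp (-(n : ℝ) *
          (∑ a, if 0 < empP x a then empP x a * Real.log (empP x a / P0 a) else 0))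
      ≤ (((univ.filter fun g : Fin n → A => cntF g = cntF x).card : ℝ)) * ∏ a, P0 a ^ cntF x a := by
  set c := cntF x with hc
  set N := (univ.filter fun g : Fin n → A => cntF g = c).card with hN
  have hPp : (0 : ℝ) < ∏ a, (c a : ℝ) ^ c a := by
    apply Finset.prod_pos
    intro a _
    rcases Nat.eq_zero_or_pos (c a) with h | h
    · rw [h]; norm_num
    · positivity
  have hsplit : (∏ a, ((n : ℝ) * P0 a / (c a : ℝ)) ^ c a)
      = (∏ a, P0 a ^ c a) * ((n : ℝ) ^ n / ∏ a, (c a : ℝ) ^ c a) := by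
    have h1 : ∀ a, ((n : ℝ) * P0 a / (c a : ℝ)) ^ c a
        = P0 a ^ c a * ((n : ℝ) ^ c a / (c a : ℝ) ^ c a) := by
      intro a
      rw [← div_pow, ← mul_pow]
      congr 1
      ring
    rw [Finset.prod_congr rfl fun a _ => h1 a, Finset.prod_mul_distrib]
    congr 1
    rw [Finset.prod_div_distrib, Finset.prod_pow_eq_pow_sum, sum_cnt]
  have hcount := count_bound x
  have hcountR : (n : ℝ) ^ n ≤ ((n : ℝ) + 1) ^ (Fintype.card A - 1) *
      ((N : ℝ) * ∏ a, (c a : ℝ) ^ c a) := by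
    have := (Nat.cast_le (α := ℝ)).2 hcount
    push_cast at this
    convert this using 2 <;> push_cast <;> ring
  have hdiv : (n : ℝ) ^ n / ∏ a, (c a : ℝ) ^ c a
      ≤ ((n : ℝ) + 1) ^ (Fintype.card A - 1) * (N : ℝ) := by
    rw [div_le_iff₀ hPp]
    calc (n : ℝ) ^ n ≤ ((n : ℝ) + 1) ^ (Fintype.card A - 1) * ((N : ℝ) * ∏ a, (c a : ℝ) ^ c a) :=
          hcountR
      _ = ((n : ℝ) + 1) ^ (Fintype.card A - 1) * (N : ℝ) * ∏ a, (c a : ℝ) ^ c a := by ring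
  rw [exp_klDiv_eq hn P0 hP0pos x, hsplit]
  have hpowpos : (0 : ℝ) < ((n : ℝ) + 1) ^ (Fintype.card A - 1) := by positivity
  have hP0prod : (0 : ℝ) ≤ ∏ a, P0 a ^ c a :=
    Finset.prod_nonneg fun a _ => pow_nonneg (hP0pos a).le _
  calc (((n : ℝ) + 1) ^ (Fintype.card A - 1))⁻¹ *
        ((∏ a, P0 a ^ c a) * ((n : ℝ) ^ n / ∏ a, (c a : ℝ) ^ c a))
      ≤ (((n : ℝ) + 1) ^ (Fintype.card A - 1))⁻¹ *
        ((∏ a, P0 a ^ c a) * (((n : ℝ) + 1) ^ (Fintype.card A - 1) * (N : ℝ))) := by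
        apply mul_le_mul_of_nonneg_left _ (by positivity)
        exact mul_le_mul_of_nonneg_left hdiv hP0prod
    _ = (N : ℝ) * ∏ a, P0 a ^ c a := by
        field_simp

lemma key_bound' [Nonempty A] (hn : 0 < n) (P0 : A → ℝ) (hP0pos : ∀ a, 0 < P0 a)
    (x : Fin n → A) :
    (((n : ℝ) + 1) ^ (Fintype.card A - 1))⁻¹ * Real.exp (-(n : ℝ) * klDiv (empP x) P0)
      ≤ (((univ.filter fun g : Fin n → A => cntF g = cntF x).card : ℝ)) * seqProb P0 x := by
  have hsp : seqProb P0 x = ∏ a, P0 a ^ cntF x a := prod_cnt_pow x P0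
  rw [hsp, klDiv]
  exact key_bound hn P0 hP0pos x

end AuxNP

/-- Lemma 1, part (a): pointwise bound on admissible Neyman–Pearson
defence rules. -/
theorem np_defence_pointwise_bound
    {A : Type} [Fintype A] [DecidableEq A] [Nonempty A] {n : ℕ} (hn : 1 ≤ n)
    (dn : (Fin n → A) → (Fin n → A) → ℝ)
    (hdnn : ∀ x y, 0 ≤ dn x y)
    (hdperm : ∀ (π : Equiv.Perm (Fin n)) (x y : Fin n → A), dn (x ∘ π) (y ∘ π) = dn x y)
    (hdrefl : ∀ y, dn y y = 0)
    (P0 : A → ℝ) (hP0 : IsPMF P0) (hP0pos : ∀ a, 0 < P0 a)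
    (Δ0 lam : ℝ) (hΔ0 : 0 ≤ Δ0) (hlam : 0 < lam)
    (Φ : (Fin n → A) → ℝ) (hΦrange : ∀ y, Φ y ∈ Set.Icc (0 : ℝ) 1)
    (hΦinv : ∀ (π : Equiv.Perm (Fin n)) (y : Fin n → A), Φ (y ∘ π) = Φ y)
    (hFP : ∀ W, InC dn Δ0 W → PFP P0 Φ W ≤ Real.exp (-(n : ℝ) * lam)) :
    ∀ y : Fin n → A,
      Φ y ≤ ((n : ℝ) + 1) ^ (Fintype.card A ^ 2 * (Fintype.card A - 1)) *
        Real.exp (-(n : ℝ) *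
          (lam - sInf {v | ∃ x : Fin n → A,
            dn x y ≤ (n : ℝ) * Δ0 ∧ v = klDiv (empP x) P0})) := by
  intro y
  have hn0 : 0 < n := hn
  have hnΔ : 0 ≤ (n : ℝ) * Δ0 := mul_nonneg (Nat.cast_nonneg n) hΔ0
  set S := {v | ∃ x : Fin n → A, dn x y ≤ (n : ℝ) * Δ0 ∧ v = klDiv (empP x) P0} with hS
  have hSne : S.Nonempty := ⟨klDiv (empP y) P0, y, by rw [hdrefl]; exact hnΔ, rfl⟩
  have hSfin : S.Finite := Set.Finite.subset
    (Set.finite_range fun x : Fin n → A => klDiv (empP x) P0)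
    (by rintro v ⟨x, -, rfl⟩; exact ⟨x, rfl⟩)
  obtain ⟨x₀, hx₀d, hx₀v⟩ := hSne.csInf_mem hSfin
  set W : (Fin n → A) → (Fin n → A) → ℝ := fun x' y' =>
    if h : ∃ π : Equiv.Perm (Fin n), x' = x₀ ∘ π then (if y' = y ∘ h.choose then 1 else 0)
    else (if y' = x' then 1 else 0) with hWdef
  have hWnonneg : ∀ x' y', 0 ≤ W x' y' := by
    intro x' y'; simp only [hWdef]; split_ifs <;> norm_num
  have hWchan : IsChannel W := by
    refine ⟨hWnonneg, fun x' => ?_⟩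
    by_cases h : ∃ π : Equiv.Perm (Fin n), x' = x₀ ∘ π
    · simp only [hWdef, dif_pos h]; simp
    · simp only [hWdef, dif_neg h]; simp
  have hWC : InC dn Δ0 W := by
    refine ⟨hWchan, fun x' y' hgt => ?_⟩
    simp only [hWdef]
    by_cases h : ∃ π : Equiv.Perm (Fin n), x' = x₀ ∘ π
    · rw [dif_pos h, if_neg]
      intro hyy
      have hx' : x' = x₀ ∘ h.choose := h.choose_spec
      rw [hx', hyy, hdperm] at hgt
      exact absurd hgt (not_lt.2 hx₀d)
    · rw [dif_neg h, if_neg]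
      intro hyy
      rw [hyy, hdrefl] at hgt
      exact absurd hgt (not_lt.2 hnΔ)
  have hFPW := hFP W hWC
  set O := univ.filter fun x' : Fin n → A => cntF x' = cntF x₀ with hO
  have hinner : ∀ x' ∈ O, (∑ y', seqProb P0 x' * W x' y' * Φ y') = seqProb P0 x₀ * Φ y := by
    intro x' hx'
    have hex : ∃ π : Equiv.Perm (Fin n), x' = x₀ ∘ π :=
      (cnt_eq_iff x' x₀).1 ((Finset.mem_filter.1 hx').2)
    have hspec : x' = x₀ ∘ hex.choose := hex.choose_spec
    have hseq : seqProb P0 x' = seqProb P0 x₀ := by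
      rw [hspec]; exact Equiv.prod_comp hex.choose (fun i => P0 (x₀ i))
    simp only [hWdef, dif_pos hex]
    calc ∑ y', seqProb P0 x' * (if y' = y ∘ hex.choose then (1:ℝ) else 0) * Φ y'
        = ∑ y', (if y' = y ∘ hex.choose then seqProb P0 x' * Φ y' else 0) :=
          Finset.sum_congr rfl fun y' _ => by split_ifs <;> ring
      _ = seqProb P0 x' * Φ (y ∘ hex.choose) := by
          rw [Finset.sum_ite_eq' univ (y ∘ hex.choose) (fun y' => seqProb P0 x' * Φ y')]
          simp
      _ = seqProb P0 x₀ * Φ y := by rw [hseq, hΦinv]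
  have hseqnn : ∀ x' : Fin n → A, 0 ≤ seqProb P0 x' := fun x' =>
    Finset.prod_nonneg fun i _ => (hP0pos (x' i)).le
  have hcard : (O.card : ℝ) * (seqProb P0 x₀ * Φ y) ≤ PFP P0 Φ W := by
    rw [PFP]
    calc (O.card : ℝ) * (seqProb P0 x₀ * Φ y)
        = ∑ x' ∈ O, ∑ y', seqProb P0 x' * W x' y' * Φ y' := by
          rw [Finset.sum_congr rfl hinner, Finset.sum_const, nsmul_eq_mul]
      _ ≤ ∑ x', ∑ y', seqProb P0 x' * W x' y' * Φ y' := by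
          apply Finset.sum_le_sum_of_subset_of_nonneg (Finset.subset_univ O)
          intro x' _ _
          exact Finset.sum_nonneg fun y' _ =>
            mul_nonneg (mul_nonneg (hseqnn x') (hWnonneg x' y')) (hΦrange y').1
  have hmain : (O.card : ℝ) * seqProb P0 x₀ * Φ y ≤ Real.exp (-(n : ℝ) * lam) := by
    rw [mul_assoc]
    calc (O.card : ℝ) * (seqProb P0 x₀ * Φ y)
        ≤ PFP P0 Φ W := hcard
      _ ≤ Real.exp (-(n : ℝ) * lam) := hFPW
  set D := klDiv (empP x₀) P0 with hD
  set E' := Fintype.card A - 1 with hE'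
  set E := Fintype.card A ^ 2 * (Fintype.card A - 1) with hE
  have hkb := key_bound' hn0 P0 hP0pos x₀
  set k := (((n : ℝ) + 1) ^ E')⁻¹ * Real.exp (-(n : ℝ) * D) with hk
  have hkpos : 0 < k := mul_pos (inv_pos.2 (by positivity)) (Real.exp_pos _)
  have hΦy0 : 0 ≤ Φ y := (hΦrange y).1
  have h1 : k * Φ y ≤ Real.exp (-(n : ℝ) * lam) := by
    calc k * Φ y ≤ ((O.card : ℝ) * seqProb P0 x₀) * Φ y :=
          mul_le_mul_of_nonneg_right hkb hΦy0
      _ = (O.card : ℝ) * seqProb P0 x₀ * Φ y := rfl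
      _ ≤ Real.exp (-(n : ℝ) * lam) := hmain
  have hΦle : Φ y ≤ Real.exp (-(n : ℝ) * lam) / k := by
    rw [le_div_iff₀ hkpos]
    calc Φ y * k = k * Φ y := mul_comm _ _
      _ ≤ _ := h1
  have hdivk : Real.exp (-(n : ℝ) * lam) / k
      = ((n : ℝ) + 1) ^ E' * Real.exp (-(n : ℝ) * (lam - D)) := by
    rw [hk, div_eq_mul_inv, mul_inv, inv_inv, ← Real.exp_neg, ← mul_assoc, mul_comm
      (Real.exp (-(n : ℝ) * lam)), mul_assoc, ← Real.exp_add]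
    congr 2
    ring
  have hE'E : E' ≤ E := by
    rw [hE, hE']
    exact Nat.le_mul_of_pos_left _ (pow_pos Fintype.card_pos 2)
  have hfin : Real.exp (-(n : ℝ) * lam) / k
      ≤ ((n : ℝ) + 1) ^ E * Real.exp (-(n : ℝ) * (lam - D)) := by
    rw [hdivk]
    apply mul_le_mul_of_nonneg_right _ (Real.exp_pos _).le
    apply pow_le_pow_right₀ (by norm_num : (1 : ℝ) ≤ (n : ℝ) + 1) hE'E
  rw [hx₀v]
  exact hΦle.trans hfin
end
end

section
/- (Lemma 1, part (b): the defence rule Φ* asymptotically meets the false-positive constraint.) Let A be a nonempty finite set, n ≥ 1, d_n : A^n × A^n → ℝ nonnegative and permutation-invariant with d_n(y,y) = 0 for all y, P_0 a strictly positive PMF on A, Δ_0 ≥ 0 and λ > 0. Define Φ*(y) = exp( −n · max{ λ − min_{x ∈ A^n : d_n(x,y) ≤ nΔ_0} D(P̂_x ‖ P_0), 0 } ). Then for every channel A ∈ C_{Δ_0}, P_FP(Φ*, A) ≤ (n+1)^{(|A|² + 2|A|)·(|A|−1) + |A|} · e^{−nλ}. -/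
open scoped Classical
open Finset Filter

noncomputable section

section AuxLemmas

variable {A : Type} [Fintype A] [DecidableEq A] {n : ℕ}

lemma aux_seqProb_nonneg {P : A → ℝ} (hP : ∀ a, 0 ≤ P a) (x : Fin n → A) :
    0 ≤ seqProb P x :=
  Finset.prod_nonneg fun _ _ => hP _

lemma aux_empP_nonneg (x : Fin n → A) (a : A) : 0 ≤ empP x a :=
  div_nonneg (Nat.cast_nonneg _) (Nat.cast_nonneg _)

lemma aux_seqProb_eq_prod_pow (P : A → ℝ) (x : Fin n → A) :
    seqProb P x = ∏ a, P a ^ (univ.filter fun i => x i = a).card := by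
  unfold seqProb
  rw [← Finset.prod_fiberwise_of_maps_to (g := x) (fun i _ => Finset.mem_univ (x i))
    (fun i => P (x i))]
  refine Finset.prod_congr rfl fun a _ => ?_
  rw [Finset.prod_congr rfl (fun i hi => congrArg P (Finset.mem_filter.mp hi).2),
    Finset.prod_const]

lemma aux_sum_card_fibers (x : Fin n → A) :
    ∑ a, (univ.filter fun i => x i = a).card = n := by
  rw [← Finset.card_eq_sum_card_fiberwise (f := x) (fun i _ => Finset.mem_univ (x i))]
  simp

lemma aux_sum_empP (hn : 1 ≤ n) (x : Fin n → A) : ∑ a, empP x a = 1 := by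
  have hn0 : (n : ℝ) ≠ 0 := by positivity
  unfold empP
  rw [← Finset.sum_div]
  rw [show ∑ a, ((univ.filter fun i => x i = a).card : ℝ) = (n : ℝ) by
    exact_mod_cast congrArg (Nat.cast : ℕ → ℝ) (aux_sum_card_fibers x)]
  exact div_self hn0

lemma aux_key_identity (hn : 1 ≤ n) {P0 : A → ℝ} (hP0pos : ∀ a, 0 < P0 a) (x : Fin n → A) :
    seqProb P0 x * Real.exp ((n : ℝ) * klDiv (empP x) P0) = seqProb (empP x) x := by
  have hn0 : (n : ℝ) ≠ 0 := by positivity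
  have hexp : Real.exp ((n : ℝ) * klDiv (empP x) P0)
      = ∏ a, (empP x a / P0 a) ^ (univ.filter fun i => x i = a).card := by
    rw [klDiv, Finset.mul_sum, Real.exp_sum]
    refine Finset.prod_congr rfl fun a _ => ?_
    set c := (univ.filter fun i => x i = a).card with hc
    rcases Nat.eq_zero_or_pos c with h0 | hpos
    · have hz : empP x a = 0 := by simp [empP, ← hc, h0]
      simp [hz, h0]
    · have hpE : 0 < empP x a := by
        unfold empP
        rw [← hc]
        positivity
      have hr : 0 < empP x a / P0 a := div_pos hpE (hP0pos a)
      have hne : (n : ℝ) * empP x a = (c : ℝ) := by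
        unfold empP; rw [← hc]; field_simp
      rw [if_pos hpE, show (n : ℝ) * (empP x a * Real.log (empP x a / P0 a))
            = (c : ℝ) * Real.log (empP x a / P0 a) by rw [← mul_assoc, hne],
        Real.exp_nat_mul, Real.exp_log hr]
  rw [hexp, aux_seqProb_eq_prod_pow P0 x, aux_seqProb_eq_prod_pow (empP x) x,
    ← Finset.prod_mul_distrib]
  refine Finset.prod_congr rfl fun a _ => ?_
  rw [← mul_pow, mul_div_cancel₀ _ (hP0pos a).ne']

lemma aux_sum_seqProb_empP_le (hn : 1 ≤ n) :
    ∑ x : Fin n → A, seqProb (empP x) x ≤ ((n : ℝ) + 1) ^ Fintype.card A := by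
  classical
  have hcard : ∀ (x : Fin n → A) (a : A), (univ.filter fun i => x i = a).card < n + 1 := by
    intro x a
    exact Nat.lt_succ_of_le (le_trans (Finset.card_filter_le _ _) (by simp))
  set tmap : (Fin n → A) → (A → Fin (n + 1)) := fun x a => ⟨_, hcard x a⟩ with htmap
  rw [← Finset.sum_fiberwise_of_maps_to (g := tmap) (fun x _ => Finset.mem_univ (tmap x))
    (fun x => seqProb (empP x) x)]
  have hbound : ∀ t : A → Fin (n + 1),
      (∑ x ∈ univ.filter fun x => tmap x = t, seqProb (empP x) x) ≤ 1 := by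
    intro t
    by_cases hne : (univ.filter fun x => tmap x = t).Nonempty
    · obtain ⟨x0, hx0⟩ := hne
      have hQ : ∀ x ∈ univ.filter fun x => tmap x = t, empP x = empP x0 := by
        intro x hx
        funext a
        have h1 : tmap x = tmap x0 := by
          rw [(Finset.mem_filter.mp hx).2, (Finset.mem_filter.mp hx0).2]
        have h2 : (univ.filter fun i => x i = a).card
            = (univ.filter fun i => x0 i = a).card := by
          have := congrArg (fun f => (f a : ℕ)) h1
          simpa [htmap] using this
        simp [empP, h2]
      have hsum1 : ∑ a, empP x0 a = 1 := aux_sum_empP hn x0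
      calc ∑ x ∈ univ.filter fun x => tmap x = t, seqProb (empP x) x
          = ∑ x ∈ univ.filter fun x => tmap x = t, seqProb (empP x0) x := by
            exact Finset.sum_congr rfl fun x hx => by rw [hQ x hx]
        _ ≤ ∑ x : Fin n → A, seqProb (empP x0) x := by
            refine Finset.sum_le_sum_of_subset_of_nonneg (Finset.filter_subset _ _)
              (fun x _ _ => aux_seqProb_nonneg (aux_empP_nonneg x0) x)
        _ = 1 := by
            rw [show (1 : ℝ) = ∏ _i : Fin n, ∑ a, empP x0 a by
                rw [hsum1]; simp]
            rw [show (∏ _i : Fin n, ∑ a, empP x0 a)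
                  = ∏ i : Fin n, ∑ a ∈ univ, empP x0 a by rfl]
            rw [Finset.prod_univ_sum (fun _ => (univ : Finset A)) (fun _ a => empP x0 a)]
            rw [Fintype.piFinset_univ]
            rfl
    · rw [Finset.not_nonempty_iff_eq_empty.mp hne]
      simp
  calc ∑ t : A → Fin (n + 1), ∑ x ∈ univ.filter fun x => tmap x = t, seqProb (empP x) x
      ≤ ∑ _t : A → Fin (n + 1), (1 : ℝ) := Finset.sum_le_sum fun t _ => hbound t
    _ = (Fintype.card (A → Fin (n + 1)) : ℝ) := by simp
    _ = ((n : ℝ) + 1) ^ Fintype.card A := by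
        rw [Fintype.card_fun, Fintype.card_fin]
        push_cast
        ring

end AuxLemmas

/-- Lemma 1, part (b): the defence rule `Φ*` asymptotically meets the
false-positive constraint. -/
theorem np_defence_fp_constraint
    {A : Type} [Fintype A] [DecidableEq A] [Nonempty A] {n : ℕ} (hn : 1 ≤ n)
    (dn : (Fin n → A) → (Fin n → A) → ℝ)
    (hdnn : ∀ x y, 0 ≤ dn x y)
    (hdperm : ∀ (π : Equiv.Perm (Fin n)) (x y : Fin n → A), dn (x ∘ π) (y ∘ π) = dn x y)
    (hdrefl : ∀ y, dn y y = 0)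
    (P0 : A → ℝ) (hP0 : IsPMF P0) (hP0pos : ∀ a, 0 < P0 a)
    (Δ0 lam : ℝ) (hΔ0 : 0 ≤ Δ0) (hlam : 0 < lam) :
    ∀ W, InC dn Δ0 W →
      PFP P0
        (fun y : Fin n → A =>
          Real.exp (-(n : ℝ) *
            max (lam - sInf {v | ∃ x : Fin n → A,
              dn x y ≤ (n : ℝ) * Δ0 ∧ v = klDiv (empP x) P0}) 0)) W
        ≤ ((n : ℝ) + 1) ^
              ((Fintype.card A ^ 2 + 2 * Fintype.card A) * (Fintype.card A - 1)
                + Fintype.card A) *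
            Real.exp (-(n : ℝ) * lam) := by
  
  intro W hW
  obtain ⟨⟨hWnn, hWsum⟩, hWzero⟩ := hW
  have hnpos : (0 : ℝ) < n := by exact_mod_cast hn
  set K := (Fintype.card A ^ 2 + 2 * Fintype.card A) * (Fintype.card A - 1)
    + Fintype.card A with hK
  -- Per-term bound
  have hterm : ∀ x y : Fin n → A,
      seqProb P0 x * W x y *
        Real.exp (-(n : ℝ) *
          max (lam - sInf {v | ∃ x' : Fin n → A,
            dn x' y ≤ (n : ℝ) * Δ0 ∧ v = klDiv (empP x') P0}) 0)
      ≤ seqProb P0 x * W x y *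
          (Real.exp (-(n : ℝ) * lam) * Real.exp ((n : ℝ) * klDiv (empP x) P0)) := by
    intro x y
    by_cases hWxy : W x y = 0
    · simp [hWxy]
    · have hd : dn x y ≤ (n : ℝ) * Δ0 := by
        by_contra hcon
        exact hWxy (hWzero x y (lt_of_not_ge hcon))
      set S : Set ℝ := {v | ∃ x' : Fin n → A,
        dn x' y ≤ (n : ℝ) * Δ0 ∧ v = klDiv (empP x') P0} with hS
      have hmem : klDiv (empP x) P0 ∈ S := ⟨x, hd, rfl⟩
      have hbdd : BddBelow S := by
        refine Set.Finite.bddBelow (Set.Finite.subset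
          (Set.finite_range fun x' : Fin n → A => klDiv (empP x') P0) ?_)
        rintro v ⟨x', _, hv⟩
        exact ⟨x', hv.symm⟩
      have hinf : sInf S ≤ klDiv (empP x) P0 := csInf_le hbdd hmem
      have hmax : lam - klDiv (empP x) P0 ≤ max (lam - sInf S) 0 :=
        le_trans (by linarith) (le_max_left _ _)
      have hexp : Real.exp (-(n : ℝ) * max (lam - sInf S) 0)
          ≤ Real.exp (-(n : ℝ) * lam) * Real.exp ((n : ℝ) * klDiv (empP x) P0) := by
        rw [← Real.exp_add]
        refine Real.exp_le_exp.mpr ?_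
        have : -(n : ℝ) * lam + (n : ℝ) * klDiv (empP x) P0
            = -(n : ℝ) * (lam - klDiv (empP x) P0) := by ring
        rw [this]
        exact mul_le_mul_of_nonpos_left hmax (by linarith)
      refine mul_le_mul_of_nonneg_left hexp ?_
      exact mul_nonneg (aux_seqProb_nonneg (fun a => (hP0pos a).le) x) (hWnn x y)
  -- Sum over y
  have hstep2 : PFP P0
      (fun y : Fin n → A =>
        Real.exp (-(n : ℝ) *
          max (lam - sInf {v | ∃ x : Fin n → A,
            dn x y ≤ (n : ℝ) * Δ0 ∧ v = klDiv (empP x) P0}) 0)) W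
      ≤ ∑ x : Fin n → A, seqProb P0 x *
          (Real.exp (-(n : ℝ) * lam) * Real.exp ((n : ℝ) * klDiv (empP x) P0)) := by
    unfold PFP
    refine le_trans (Finset.sum_le_sum fun x _ =>
      Finset.sum_le_sum fun y _ => hterm x y) ?_
    refine le_of_eq (Finset.sum_congr rfl fun x _ => ?_)
    rw [show ∑ y : Fin n → A, seqProb P0 x * W x y *
          (Real.exp (-(n : ℝ) * lam) * Real.exp ((n : ℝ) * klDiv (empP x) P0))
        = (seqProb P0 x *
            (Real.exp (-(n : ℝ) * lam) * Real.exp ((n : ℝ) * klDiv (empP x) P0))) *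
            ∑ y : Fin n → A, W x y by
      rw [Finset.mul_sum]; exact Finset.sum_congr rfl fun y _ => by ring]
    rw [hWsum x, mul_one]
  refine le_trans hstep2 ?_
  have hmain : ∑ x : Fin n → A, seqProb P0 x *
      (Real.exp (-(n : ℝ) * lam) * Real.exp ((n : ℝ) * klDiv (empP x) P0))
      = Real.exp (-(n : ℝ) * lam) * ∑ x : Fin n → A, seqProb (empP x) x := by
    rw [Finset.mul_sum]
    refine Finset.sum_congr rfl fun x _ => ?_
    rw [← aux_key_identity hn hP0pos x]
    ring
  rw [hmain]
  have h1 : Real.exp (-(n : ℝ) * lam) * ∑ x : Fin n → A, seqProb (empP x) x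
      ≤ Real.exp (-(n : ℝ) * lam) * ((n : ℝ) + 1) ^ Fintype.card A :=
    mul_le_mul_of_nonneg_left (aux_sum_seqProb_empP_le hn) (Real.exp_nonneg _)
  refine le_trans h1 ?_
  rw [mul_comm]
  refine mul_le_mul_of_nonneg_right ?_ (Real.exp_nonneg _)
  refine pow_le_pow_right₀ (by linarith) ?_
  exact Nat.le_add_left _ _
end
end

section
/- (Theorem 4: the fully active exponent as a partially active exponent with summed distortion, metric case.) Let A be a nonempty finite set and let d : A × A → ℝ be a metric on A (nonnegative, d(a,b) = 0 iff a = b, symmetric, satisfying the triangle inequality). Let P_0, P_1 be strictly positive PMFs on A, and let λ, Δ_0, Δ_1 ≥ 0. Then min over PMFs P_Y with D̃_{Δ_0}(P_Y, P_0) ≤ λ of D̃_{Δ_1}(P_Y, P_1) equals min over PMFs P_Z with D(P_Z ‖ P_0) ≤ λ of D̃_{Δ_0 + Δ_1}(P_Z, P_1). -/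
open scoped Classical
open Finset Filter

noncomputable section

section Helpers
variable {A : Type} [Fintype A]

lemma isPMF_margX {Q : A × A → ℝ} (hQ : IsPMF Q) : IsPMF (margX Q) := by
  constructor
  · intro a; exact Finset.sum_nonneg fun b _ => hQ.1 _
  · rw [← hQ.2, Fintype.sum_prod_type]; rfl

lemma isPMF_margY {Q : A × A → ℝ} (hQ : IsPMF Q) : IsPMF (margY Q) := by
  constructor
  · intro b; exact Finset.sum_nonneg fun a _ => hQ.1 _
  · rw [← hQ.2, Fintype.sum_prod_type]
    rw [Finset.sum_comm]; rfl

lemma klDiv_term (p x : ℝ) (hp : 0 < p) :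
    (if 0 < x then x * Real.log (x / p) else 0)
      = (max x 0) * Real.log (max x 0) - (max x 0) * Real.log p := by
  rcases lt_or_ge 0 x with hx | hx
  · rw [if_pos hx, max_eq_left hx.le, Real.log_div hx.ne' hp.ne', mul_sub]
  · rw [if_neg (not_lt.2 hx), max_eq_right hx]
    simp

lemma klDiv_eq (Q P : A → ℝ) (hP : ∀ a, 0 < P a) :
    klDiv Q P = ∑ a, ((max (Q a) 0) * Real.log (max (Q a) 0)
      - (max (Q a) 0) * Real.log (P a)) := by
  unfold klDiv
  exact Finset.sum_congr rfl fun a _ => klDiv_term (P a) (Q a) (hP a)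

lemma klDiv_nonneg {Q P : A → ℝ} (hQ : IsPMF Q) (hP : IsPMF P)
    (hPp : ∀ a, 0 < P a) : 0 ≤ klDiv Q P := by
  have key : ∀ a, (if 0 < Q a then Q a - P a else 0)
      ≤ (if 0 < Q a then Q a * Real.log (Q a / P a) else 0) := by
    intro a
    by_cases h : 0 < Q a
    · rw [if_pos h, if_pos h]
      have h1 : Real.log (P a / Q a) ≤ P a / Q a - 1 :=
        Real.log_le_sub_one_of_pos (div_pos (hPp a) h)
      have h2 : 1 - P a / Q a ≤ Real.log (Q a / P a) := by
        have := Real.log_inv (P a / Q a)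
        rw [inv_div] at this
        linarith [h1, this]
      calc Q a - P a = Q a * (1 - P a / Q a) := by
            field_simp
        _ ≤ Q a * Real.log (Q a / P a) := by
            exact mul_le_mul_of_nonneg_left h2 h.le
    · simp [h]
  have hsum : ∑ a, (if 0 < Q a then Q a - P a else 0) ≤ klDiv Q P :=
    Finset.sum_le_sum fun a _ => key a
  have e1 : ∑ a, (if 0 < Q a then Q a - P a else 0)
      = ∑ a, (if 0 < Q a then Q a else 0) - ∑ a, (if 0 < Q a then P a else 0) := by
    rw [← Finset.sum_sub_distrib]
    exact Finset.sum_congr rfl fun a _ => by split <;> simp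
  have e2 : ∑ a, (if 0 < Q a then Q a else 0) = 1 := by
    rw [← hQ.2]
    refine Finset.sum_congr rfl fun a _ => ?_
    rcases (hQ.1 a).lt_or_eq with h | h
    · rw [if_pos h]
    · rw [if_neg (by rw [← h]; exact lt_irrefl 0), ← h]
  have e3 : ∑ a, (if 0 < Q a then P a else 0) ≤ 1 := by
    rw [← hP.2]
    refine Finset.sum_le_sum fun a _ => ?_
    split
    · exact le_refl _
    · exact (hPp a).le
  linarith [hsum, e1, e2, e3]

lemma klDiv_self {P : A → ℝ} (hPp : ∀ a, 0 < P a) : klDiv P P = 0 := by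
  unfold klDiv
  refine Finset.sum_eq_zero fun a _ => ?_
  rw [if_pos (hPp a), div_self (hPp a).ne', Real.log_one, mul_zero]

end Helpers
section Helpers2
variable {A : Type} [Fintype A]

lemma Dtilde_bddBelow (d : A → A → ℝ) (Δ : ℝ) (PY P : A → ℝ) (hP : IsPMF P)
    (hPp : ∀ a, 0 < P a) :
    BddBelow {v | ∃ Q : A × A → ℝ,
      IsPMF Q ∧ margY Q = PY ∧ expDist d Q ≤ Δ ∧ v = klDiv (margX Q) P} := by
  refine ⟨0, fun v hv => ?_⟩
  obtain ⟨Q, h1, _, _, hv⟩ := hv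
  exact hv ▸ klDiv_nonneg (isPMF_margX h1) hP hPp

lemma Dtilde_le_of_mem {d : A → A → ℝ} {Δ : ℝ} {PY P : A → ℝ} (hP : IsPMF P)
    (hPp : ∀ a, 0 < P a) {Q : A × A → ℝ} (h1 : IsPMF Q) (h2 : margY Q = PY)
    (h3 : expDist d Q ≤ Δ) : Dtilde d Δ PY P ≤ klDiv (margX Q) P :=
  csInf_le (Dtilde_bddBelow d Δ PY P hP hPp) ⟨Q, h1, h2, h3, rfl⟩

lemma Dtilde_nonneg (d : A → A → ℝ) (Δ : ℝ) (PY P : A → ℝ) (hP : IsPMF P)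
    (hPp : ∀ a, 0 < P a) : 0 ≤ Dtilde d Δ PY P := by
  refine Real.sInf_nonneg fun v hv => ?_
  obtain ⟨Q, h1, _, _, hv⟩ := hv
  exact hv ▸ klDiv_nonneg (isPMF_margX h1) hP hPp

/-- Identity coupling. -/
lemma idQ_props {d : A → A → ℝ} (hdd : ∀ a, d a a = 0) {PY : A → ℝ} (hPY : IsPMF PY) :
    ∃ Q : A × A → ℝ, IsPMF Q ∧ margY Q = PY ∧ expDist d Q = 0 ∧ margX Q = PY := by
  classical
  refine ⟨fun q => if q.1 = q.2 then PY q.2 else 0, ⟨fun q => ?_, ?_⟩, ?_, ?_, ?_⟩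
  · dsimp only
    split
    · exact hPY.1 _
    · exact le_refl 0
  · rw [Fintype.sum_prod_type, ← hPY.2]
    refine Finset.sum_congr rfl fun a _ => ?_
    simp
  · funext b
    unfold margY
    simp
  · unfold expDist
    refine Finset.sum_eq_zero fun q _ => ?_
    by_cases h : q.1 = q.2
    · simp only [if_pos h, h, hdd, mul_zero]
    · simp [h]
  · funext a
    unfold margX
    simp

lemma Dtilde_attained (d : A → A → ℝ) (hdd : ∀ a, d a a = 0)
    {Δ : ℝ} (hΔ : 0 ≤ Δ) {PY P : A → ℝ} (hPY : IsPMF PY) (hP : IsPMF P)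
    (hPp : ∀ a, 0 < P a) :
    ∃ Q : A × A → ℝ, IsPMF Q ∧ margY Q = PY ∧ expDist d Q ≤ Δ ∧
      klDiv (margX Q) P = Dtilde d Δ PY P := by
  classical
  set S : Set (A × A → ℝ) := {Q | IsPMF Q ∧ margY Q = PY ∧ expDist d Q ≤ Δ} with hS
  have hSne : S.Nonempty := by
    obtain ⟨Q, h1, h2, h3, _⟩ := idQ_props hdd hPY
    exact ⟨Q, h1, h2, h3.le.trans hΔ⟩
  have hSeq : S = (⋂ q, {Q : A × A → ℝ | 0 ≤ Q q}) ∩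
      ({Q : A × A → ℝ | ∑ q, Q q = 1} ∩
        ((⋂ b, {Q : A × A → ℝ | margY Q b = PY b}) ∩
          {Q : A × A → ℝ | expDist d Q ≤ Δ})) := by
    ext Q
    simp only [hS, Set.mem_setOf_eq, Set.mem_inter_iff, Set.mem_iInter, IsPMF, funext_iff]
    tauto
  have hclosed : IsClosed S := by
    rw [hSeq]
    refine (isClosed_iInter fun q =>
        isClosed_le continuous_const (continuous_apply q)).inter
      ((isClosed_eq (continuous_finset_sum _ fun q _ => continuous_apply q)
        continuous_const).inter
        ((isClosed_iInter fun b => isClosed_eq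
            (continuous_finset_sum _ fun a _ => continuous_apply (a, b))
            continuous_const).inter
          (isClosed_le (continuous_finset_sum _ fun q _ =>
            (continuous_apply q).mul continuous_const) continuous_const)))
  have hbdd : Bornology.IsBounded S := by
    refine (Metric.isBounded_closedBall (x := (0 : A × A → ℝ)) (r := 1)).subset fun Q hQ => ?_
    rw [Metric.mem_closedBall, dist_zero_right]
    rw [pi_norm_le_iff_of_nonneg zero_le_one]
    intro q
    rw [Real.norm_eq_abs, abs_le]
    constructor
    · linarith [hQ.1.1 q]
    · calc Q q ≤ ∑ q', Q q' := Finset.single_le_sum (fun q' _ => hQ.1.1 q') (Finset.mem_univ q)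
        _ = 1 := hQ.1.2
  have hcomp : IsCompact S := Metric.isCompact_of_isClosed_isBounded hclosed hbdd
  have hf : Continuous fun Q : A × A → ℝ => klDiv (margX Q) P := by
    have he : (fun Q : A × A → ℝ => klDiv (margX Q) P)
        = fun Q => ∑ a, ((max (margX Q a) 0) * Real.log (max (margX Q a) 0)
            - (max (margX Q a) 0) * Real.log (P a)) :=
      funext fun Q => klDiv_eq _ _ hPp
    rw [he]
    refine continuous_finset_sum _ fun a _ => ?_
    have hm : Continuous fun Q : A × A → ℝ => max (margX Q a) 0 :=
      (continuous_finset_sum _ fun b _ => continuous_apply (a, b)).max continuous_const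
    exact (Real.continuous_mul_log.comp hm).sub (hm.mul continuous_const)
  obtain ⟨Q, hQS, hmin⟩ := hcomp.exists_isMinOn hSne hf.continuousOn
  refine ⟨Q, hQS.1, hQS.2.1, hQS.2.2, ?_⟩
  apply le_antisymm
  · refine le_csInf ⟨klDiv (margX Q) P, Q, hQS.1, hQS.2.1, hQS.2.2, rfl⟩ ?_
    rintro v ⟨Q', h1, h2, h3, rfl⟩
    exact hmin (Set.mem_setOf_eq ▸ (⟨h1, h2, h3⟩ : IsPMF Q' ∧ margY Q' = PY ∧ expDist d Q' ≤ Δ))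
  · exact Dtilde_le_of_mem hP hPp hQS.1 hQS.2.1 hQS.2.2

end Helpers2
section Helpers3
variable {A : Type} [Fintype A]

lemma margY_zero {Q : A × A → ℝ} (hQ : IsPMF Q) {y : A} (h : margY Q y = 0) (x : A) :
    Q (x, y) = 0 :=
  le_antisymm (h ▸ Finset.single_le_sum (fun a _ => hQ.1 (a, y)) (Finset.mem_univ x)) (hQ.1 _)

/-- Gluing two couplings along their common Y-marginal. -/
lemma glue {d : A → A → ℝ} (hdsymm : ∀ a b, d a b = d b a)
    (hdtri : ∀ a b c, d a c ≤ d a b + d b c)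
    {Q1 Q0 : A × A → ℝ} {PY : A → ℝ}
    (hQ1 : IsPMF Q1) (hQ1Y : margY Q1 = PY) (hQ0 : IsPMF Q0) (hQ0Y : margY Q0 = PY) :
    ∃ Q : A × A → ℝ, IsPMF Q ∧ margX Q = margX Q1 ∧ margY Q = margX Q0 ∧
      expDist d Q ≤ expDist d Q1 + expDist d Q0 := by
  classical
  set T : A → A → A → ℝ :=
    fun x y z => if PY y = 0 then 0 else Q1 (x, y) * Q0 (z, y) / PY y with hT
  have hTnn : ∀ x y z, 0 ≤ T x y z := by
    intro x y z
    simp only [hT]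
    split
    · exact le_refl 0
    · exact div_nonneg (mul_nonneg (hQ1.1 _) (hQ0.1 _)) (hQ1Y ▸ Finset.sum_nonneg fun a _ => hQ1.1 (a, y))
  have hPYnn : ∀ y, 0 ≤ PY y := fun y => hQ1Y ▸ Finset.sum_nonneg fun a _ => hQ1.1 (a, y)
  have hsx : ∀ y z, ∑ x, T x y z = Q0 (z, y) := by
    intro y z
    by_cases h : PY y = 0
    · simp only [hT, if_pos h]
      rw [Finset.sum_const, smul_zero]
      exact (margY_zero hQ0 (hQ0Y.symm ▸ h) z).symm
    · simp only [hT, if_neg h]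
      rw [← Finset.sum_div, ← Finset.sum_mul]
      have : ∑ x, Q1 (x, y) = PY y := by rw [← hQ1Y]; rfl
      rw [this]
      field_simp
  have hsz : ∀ x y, ∑ z, T x y z = Q1 (x, y) := by
    intro x y
    by_cases h : PY y = 0
    · simp only [hT, if_pos h]
      rw [Finset.sum_const, smul_zero]
      exact (margY_zero hQ1 (hQ1Y.symm ▸ h) x).symm
    · simp only [hT, if_neg h]
      rw [← Finset.sum_div, ← Finset.mul_sum]
      have : ∑ z, Q0 (z, y) = PY y := by rw [← hQ0Y]; rfl
      rw [this]
      field_simp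
  refine ⟨fun p => ∑ y, T p.1 y p.2, ⟨fun p => Finset.sum_nonneg fun y _ => hTnn _ _ _, ?_⟩,
      ?_, ?_, ?_⟩
  · rw [Fintype.sum_prod_type]
    have : ∀ x, ∑ z, ∑ y, T x y z = ∑ y, Q1 (x, y) := by
      intro x
      rw [Finset.sum_comm]
      exact Finset.sum_congr rfl fun y _ => hsz x y
    simp only [this]
    rw [← hQ1.2, Fintype.sum_prod_type]
  · funext a
    show ∑ b, ∑ y, T a y b = margX Q1 a
    rw [Finset.sum_comm]
    unfold margX
    exact Finset.sum_congr rfl fun y _ => hsz a y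
  · funext b
    show ∑ a, ∑ y, T a y b = margX Q0 b
    rw [Finset.sum_comm]
    unfold margX
    exact Finset.sum_congr rfl fun y _ => hsx y b
  · unfold expDist
    calc ∑ q : A × A, (∑ y, T q.1 y q.2) * d q.1 q.2
        ≤ ∑ q : A × A, ∑ y, T q.1 y q.2 * (d q.1 y + d y q.2) := by
          refine Finset.sum_le_sum fun q _ => ?_
          rw [Finset.sum_mul]
          refine Finset.sum_le_sum fun y _ => ?_
          exact mul_le_mul_of_nonneg_left (hdtri q.1 y q.2) (hTnn _ _ _)
      _ = (∑ q : A × A, ∑ y, T q.1 y q.2 * d q.1 y)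
          + ∑ q : A × A, ∑ y, T q.1 y q.2 * d y q.2 := by
          rw [← Finset.sum_add_distrib]
          refine Finset.sum_congr rfl fun q _ => ?_
          rw [← Finset.sum_add_distrib]
          exact Finset.sum_congr rfl fun y _ => by ring
      _ ≤ expDist d Q1 + expDist d Q0 := by
          have e1 : ∑ q : A × A, ∑ y, T q.1 y q.2 * d q.1 y = expDist d Q1 := by
            rw [Fintype.sum_prod_type]
            unfold expDist
            rw [Fintype.sum_prod_type]
            refine Finset.sum_congr rfl fun x _ => ?_
            rw [Finset.sum_comm]
            refine Finset.sum_congr rfl fun y _ => ?_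
            dsimp only
            rw [← Finset.sum_mul, hsz x y]
          have e2 : ∑ q : A × A, ∑ y, T q.1 y q.2 * d y q.2 = expDist d Q0 := by
            rw [Fintype.sum_prod_type]
            rw [Finset.sum_comm]
            unfold expDist
            rw [Fintype.sum_prod_type]
            refine Finset.sum_congr rfl fun z _ => ?_
            rw [Finset.sum_comm]
            refine Finset.sum_congr rfl fun y _ => ?_
            dsimp only
            rw [← Finset.sum_mul, hsx y z, hdsymm]
          rw [e1, e2]
end Helpers3
section Helpers4
variable {A : Type} [Fintype A]

/-- Splitting a coupling with distortion budget `Δ0 + Δ1` through an intermediate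
variable. -/
lemma split {d : A → A → ℝ} (hd : ∀ a b, 0 ≤ d a b) (hdd : ∀ a, d a a = 0)
    (hdsymm : ∀ a b, d a b = d b a) {Q : A × A → ℝ} (hQ : IsPMF Q)
    {Δ0 Δ1 : ℝ} (hΔ0 : 0 ≤ Δ0) (hΔ1 : 0 ≤ Δ1) (hE : expDist d Q ≤ Δ0 + Δ1) :
    ∃ (PY : A → ℝ) (QXY QZY : A × A → ℝ), IsPMF PY ∧
      IsPMF QXY ∧ margY QXY = PY ∧ margX QXY = margX Q ∧ expDist d QXY ≤ Δ1 ∧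
      IsPMF QZY ∧ margY QZY = PY ∧ margX QZY = margY Q ∧ expDist d QZY ≤ Δ0 := by
  classical
  have hE0 : 0 ≤ expDist d Q :=
    Finset.sum_nonneg fun q _ => mul_nonneg (hQ.1 q) (hd q.1 q.2)
  set t : ℝ := if Δ0 + Δ1 = 0 then 1 else Δ1 / (Δ0 + Δ1) with ht
  have htfacts : 0 ≤ t ∧ t ≤ 1 ∧ t * expDist d Q ≤ Δ1 ∧ (1 - t) * expDist d Q ≤ Δ0 := by
    by_cases h : Δ0 + Δ1 = 0
    · have h0 : Δ0 = 0 := by linarith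
      have h1 : Δ1 = 0 := by linarith
      have hEz : expDist d Q = 0 := le_antisymm (by linarith) hE0
      rw [ht, if_pos h, hEz]
      norm_num [h0, h1]
    · have hs : 0 < Δ0 + Δ1 := lt_of_le_of_ne (by linarith) (Ne.symm h)
      rw [ht, if_neg h]
      refine ⟨div_nonneg hΔ1 hs.le, (div_le_one hs).2 (by linarith), ?_, ?_⟩
      · calc Δ1 / (Δ0 + Δ1) * expDist d Q ≤ Δ1 / (Δ0 + Δ1) * (Δ0 + Δ1) :=
            mul_le_mul_of_nonneg_left hE (div_nonneg hΔ1 hs.le)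
          _ = Δ1 := div_mul_cancel₀ _ hs.ne'
      · have : 1 - Δ1 / (Δ0 + Δ1) = Δ0 / (Δ0 + Δ1) := by field_simp; ring
        rw [this]
        calc Δ0 / (Δ0 + Δ1) * expDist d Q ≤ Δ0 / (Δ0 + Δ1) * (Δ0 + Δ1) :=
            mul_le_mul_of_nonneg_left hE (div_nonneg hΔ0 hs.le)
          _ = Δ0 := div_mul_cancel₀ _ hs.ne'
  obtain ⟨ht0, ht1, htA, htB⟩ := htfacts
  have ht1' : 0 ≤ 1 - t := by linarith
  have hXnn := (isPMF_margX hQ).1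
  have hYnn := (isPMF_margY hQ).1
  refine ⟨fun y => (1 - t) * margX Q y + t * margY Q y,
    fun p => (1 - t) * (if p.2 = p.1 then margX Q p.1 else 0) + t * Q p,
    fun p => (1 - t) * Q (p.2, p.1) + t * (if p.2 = p.1 then margY Q p.1 else 0),
    ⟨fun y => add_nonneg (mul_nonneg ht1' (hXnn y)) (mul_nonneg ht0 (hYnn y)), ?_⟩,
    ⟨fun p => add_nonneg (mul_nonneg ht1' (by split; exacts [hXnn _, le_refl 0]))
        (mul_nonneg ht0 (hQ.1 p)), ?_⟩, ?_, ?_, ?_,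
    ⟨fun p => add_nonneg (mul_nonneg ht1' (hQ.1 _))
        (mul_nonneg ht0 (by split; exacts [hYnn _, le_refl 0])), ?_⟩, ?_, ?_, ?_⟩
  · -- PY sums to 1
    rw [Finset.sum_add_distrib, ← Finset.mul_sum, ← Finset.mul_sum,
      (isPMF_margX hQ).2, (isPMF_margY hQ).2]
    ring
  · -- QXY sums to 1
    rw [Finset.sum_add_distrib, ← Finset.mul_sum, ← Finset.mul_sum, hQ.2,
      Fintype.sum_prod_type]
    have : ∀ x : A, ∑ y, (if ((x : A), y).2 = ((x : A), y).1 then margX Q ((x,y) : A × A).1 else 0)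
        = margX Q x := by
      intro x
      simp
    simp only [this]
    rw [(isPMF_margX hQ).2]
    ring
  · -- margY QXY = PY
    funext y
    unfold margY
    rw [Finset.sum_add_distrib, ← Finset.mul_sum, ← Finset.mul_sum]
    congr 1
    simp
  · -- margX QXY = margX Q
    funext x
    show (∑ b, ((1 - t) * (if b = x then margX Q x else 0) + t * Q (x, b))) = margX Q x
    rw [Finset.sum_add_distrib, ← Finset.mul_sum, ← Finset.mul_sum]
    have h1 : ∑ b, (if b = x then margX Q x else 0) = margX Q x := by simp
    have h2 : (∑ b, Q (x, b)) = margX Q x := rfl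
    rw [h1, h2]
    ring
  · -- expDist QXY ≤ Δ1
    unfold expDist
    have : ∀ q : A × A, ((1 - t) * (if q.2 = q.1 then margX Q q.1 else 0) + t * Q q) * d q.1 q.2
        = (1 - t) * ((if q.2 = q.1 then margX Q q.1 else 0) * d q.1 q.2) + t * (Q q * d q.1 q.2) := by
      intro q; ring
    simp only [this]
    rw [Finset.sum_add_distrib, ← Finset.mul_sum, ← Finset.mul_sum]
    have hz : ∑ q : A × A, (if q.2 = q.1 then margX Q q.1 else 0) * d q.1 q.2 = 0 := by
      refine Finset.sum_eq_zero fun q _ => ?_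
      by_cases h : q.2 = q.1
      · rw [if_pos h, h, hdd, mul_zero]
      · rw [if_neg h, zero_mul]
    rw [hz, mul_zero, zero_add]
    exact htA
  · -- QZY sums to 1
    rw [Finset.sum_add_distrib, ← Finset.mul_sum, ← Finset.mul_sum]
    have h1 : ∑ q : A × A, Q (q.2, q.1) = 1 := by
      rw [Fintype.sum_prod_type, Finset.sum_comm, ← Fintype.sum_prod_type, hQ.2]
    have h2 : ∑ q : A × A, (if q.2 = q.1 then margY Q q.1 else 0) = 1 := by
      rw [Fintype.sum_prod_type]
      have : ∀ x : A, ∑ y, (if y = x then margY Q x else 0) = margY Q x := by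
        intro x; simp
      simp only [this]
      exact (isPMF_margY hQ).2
    rw [h1, h2]
    ring
  · -- margY QZY = PY
    funext y
    show (∑ a, ((1 - t) * Q (y, a) + t * (if y = a then margY Q a else 0)))
        = (1 - t) * margX Q y + t * margY Q y
    rw [Finset.sum_add_distrib, ← Finset.mul_sum, ← Finset.mul_sum]
    have h1 : (∑ a, Q (y, a)) = margX Q y := rfl
    have h2 : ∑ a, (if y = a then margY Q a else 0) = margY Q y := by simp
    rw [h1, h2]
  · -- margX QZY = margY Q
    funext z
    show (∑ b, ((1 - t) * Q (b, z) + t * (if b = z then margY Q z else 0))) = margY Q z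
    rw [Finset.sum_add_distrib, ← Finset.mul_sum, ← Finset.mul_sum]
    have h1 : (∑ b, Q (b, z)) = margY Q z := rfl
    have h2 : ∑ b, (if b = z then margY Q z else 0) = margY Q z := by simp
    rw [h1, h2]
    ring
  · -- expDist QZY ≤ Δ0
    unfold expDist
    have : ∀ q : A × A, ((1 - t) * Q (q.2, q.1) + t * (if q.2 = q.1 then margY Q q.1 else 0)) * d q.1 q.2
        = (1 - t) * (Q (q.2, q.1) * d q.1 q.2) + t * ((if q.2 = q.1 then margY Q q.1 else 0) * d q.1 q.2) := by
      intro q; ring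
    simp only [this]
    rw [Finset.sum_add_distrib, ← Finset.mul_sum, ← Finset.mul_sum]
    have hz : ∑ q : A × A, (if q.2 = q.1 then margY Q q.1 else 0) * d q.1 q.2 = 0 := by
      refine Finset.sum_eq_zero fun q _ => ?_
      by_cases h : q.2 = q.1
      · rw [if_pos h, h, hdd, mul_zero]
      · rw [if_neg h, zero_mul]
    rw [hz, mul_zero, add_zero]
    have h1 : ∑ q : A × A, Q (q.2, q.1) * d q.1 q.2 = expDist d Q := by
      unfold expDist
      rw [Fintype.sum_prod_type, Finset.sum_comm, Fintype.sum_prod_type]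
      refine Finset.sum_congr rfl fun a _ => Finset.sum_congr rfl fun b _ => ?_
      dsimp only
      rw [hdsymm]
    rw [h1]
    exact htB
end Helpers4
/-- Theorem 4: the fully active exponent as a partially active exponent
with summed distortion, metric case. -/
theorem fully_active_eq_summed_metric
    {A : Type} [Fintype A] [Nonempty A]
    (d : A → A → ℝ) (hd : ∀ a b, 0 ≤ d a b)
    (hdeq : ∀ a b, d a b = 0 ↔ a = b)
    (hdsymm : ∀ a b, d a b = d b a)
    (hdtri : ∀ a b c, d a c ≤ d a b + d b c)
    (P0 P1 : A → ℝ) (hP0 : IsPMF P0) (hP1 : IsPMF P1)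
    (hP0pos : ∀ a, 0 < P0 a) (hP1pos : ∀ a, 0 < P1 a)
    (lam Δ0 Δ1 : ℝ) (hlam : 0 ≤ lam) (hΔ0 : 0 ≤ Δ0) (hΔ1 : 0 ≤ Δ1) :
    sInf {v | ∃ PY : A → ℝ,
        IsPMF PY ∧ Dtilde d Δ0 PY P0 ≤ lam ∧ v = Dtilde d Δ1 PY P1}
      = sInf {v | ∃ PZ : A → ℝ,
        IsPMF PZ ∧ klDiv PZ P0 ≤ lam ∧ v = Dtilde d (Δ0 + Δ1) PZ P1} := by
  classical
  have hdd : ∀ a, d a a = 0 := fun a => (hdeq a a).2 rfl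
  obtain ⟨Qid, hQid, hQidY, hQidE, hQidX⟩ := idQ_props hdd hP0
  have hL_ne : {v | ∃ PY : A → ℝ,
      IsPMF PY ∧ Dtilde d Δ0 PY P0 ≤ lam ∧ v = Dtilde d Δ1 PY P1}.Nonempty := by
    refine ⟨Dtilde d Δ1 P0 P1, P0, hP0, ?_, rfl⟩
    have h1 : Dtilde d Δ0 P0 P0 ≤ klDiv (margX Qid) P0 :=
      Dtilde_le_of_mem hP0 hP0pos hQid hQidY (by rw [hQidE]; exact hΔ0)
    rw [hQidX, klDiv_self hP0pos] at h1
    exact h1.trans hlam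
  have hR_ne : {v | ∃ PZ : A → ℝ,
      IsPMF PZ ∧ klDiv PZ P0 ≤ lam ∧ v = Dtilde d (Δ0 + Δ1) PZ P1}.Nonempty :=
    ⟨Dtilde d (Δ0 + Δ1) P0 P1, P0, hP0, by rw [klDiv_self hP0pos]; exact hlam, rfl⟩
  have bddL : BddBelow {v | ∃ PY : A → ℝ,
      IsPMF PY ∧ Dtilde d Δ0 PY P0 ≤ lam ∧ v = Dtilde d Δ1 PY P1} := by
    refine ⟨0, fun v hv => ?_⟩
    obtain ⟨PY, hPY, _, rfl⟩ := hv
    exact Dtilde_nonneg d Δ1 PY P1 hP1 hP1pos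
  have bddR : BddBelow {v | ∃ PZ : A → ℝ,
      IsPMF PZ ∧ klDiv PZ P0 ≤ lam ∧ v = Dtilde d (Δ0 + Δ1) PZ P1} := by
    refine ⟨0, fun v hv => ?_⟩
    obtain ⟨PZ, hPZ, _, rfl⟩ := hv
    exact Dtilde_nonneg d (Δ0 + Δ1) PZ P1 hP1 hP1pos
  apply le_antisymm
  · -- LHS ≤ RHS
    refine le_csInf hR_ne ?_
    rintro v ⟨PZ, hPZ, hPZkl, rfl⟩
    obtain ⟨Q, hQ, hQY, hQE, hQval⟩ :=
      Dtilde_attained d hdd (add_nonneg hΔ0 hΔ1) hPZ hP1 hP1pos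
    obtain ⟨PY, QXY, QZY, hPY, hQXY, hQXYY, hQXYX, hQXYE, hQZY, hQZYY, hQZYX, hQZYE⟩ :=
      split hd hdd hdsymm hQ hΔ0 hΔ1 hQE
    have hfeas : Dtilde d Δ0 PY P0 ≤ lam := by
      have h1 : Dtilde d Δ0 PY P0 ≤ klDiv (margX QZY) P0 :=
        Dtilde_le_of_mem hP0 hP0pos hQZY hQZYY hQZYE
      rw [hQZYX, hQY] at h1
      exact h1.trans hPZkl
    refine le_trans (csInf_le bddL ⟨PY, hPY, hfeas, rfl⟩) ?_
    have h2 : Dtilde d Δ1 PY P1 ≤ klDiv (margX QXY) P1 :=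
      Dtilde_le_of_mem hP1 hP1pos hQXY hQXYY hQXYE
    rw [hQXYX, hQval] at h2
    exact h2
  · -- RHS ≤ LHS
    refine le_csInf hL_ne ?_
    rintro v ⟨PY, hPY, hPYD, rfl⟩
    obtain ⟨Q0, hQ0, hQ0Y, hQ0E, hQ0val⟩ := Dtilde_attained d hdd hΔ0 hPY hP0 hP0pos
    have hQ0kl : klDiv (margX Q0) P0 ≤ lam := hQ0val ▸ hPYD
    obtain ⟨Q1, hQ1, hQ1Y, hQ1E, hQ1val⟩ := Dtilde_attained d hdd hΔ1 hPY hP1 hP1pos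
    obtain ⟨Qg, hQg, hQgX, hQgY, hQgE⟩ := glue hdsymm hdtri hQ1 hQ1Y hQ0 hQ0Y
    refine le_trans (csInf_le bddR ⟨margX Q0, isPMF_margX hQ0, hQ0kl, rfl⟩) ?_
    have h2 : Dtilde d (Δ0 + Δ1) (margX Q0) P1 ≤ klDiv (margX Qg) P1 :=
      Dtilde_le_of_mem hP1 hP1pos hQg hQgY
        (hQgE.trans (by linarith [add_le_add hQ1E hQ0E]))
    rw [hQgX, hQ1val] at h2
    exact h2
end
end
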